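/- arXiv:2404.12230 — 3 statements merged into one kernel-verified Lean document; each statement's English description precedes it below -/
import Mathlib

section
/- Let g : ℝ → ℂ be a 2π-periodic essentially bounded measurable function and define f(k) = (1/(2π)) ∫₀^{2π} g(t) e^{-ikt} dt for k ∈ ℕ, k ≥ 1. Then for every n ∈ ℕ, the operator 2-norm of the n × n Hankel matrix H with entries H_{ij} = f(i+j-1) satisfies ‖H‖₂ ≤ esssup_{t ∈ ℝ} |g(t)|. -/
open MeasureTheory Real Complex
open scoped ENNReal



lemma exp_ortho (a b : ℕ) :
    (∫ t in Set.Ioc (0:ℝ) (2*π),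
        Complex.exp (-Complex.I*a*t) * (starRingEnd ℂ) (Complex.exp (-Complex.I*b*t))) =
      if a = b then (2*π : ℂ) else 0 := by
  have h2π : (0:ℝ) ≤ 2*π := by positivity
  have key : ∀ t : ℝ, Complex.exp (-Complex.I*a*t) * (starRingEnd ℂ) (Complex.exp (-Complex.I*b*t))
      = Complex.exp ((Complex.I * ((b:ℂ) - a)) * t) := by
    intro t
    rw [← Complex.exp_conj, ← Complex.exp_add]
    congr 1
    simp only [map_mul, map_neg, Complex.conj_I, Complex.conj_natCast, Complex.conj_ofReal]
    ring
  simp only [key]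
  rw [← intervalIntegral.integral_of_le h2π]
  by_cases hab : a = b
  · subst hab
    simp [sub_self, Complex.ofReal_mul]
  · have hc : Complex.I * ((b:ℂ) - a) ≠ 0 := by
      refine mul_ne_zero Complex.I_ne_zero (sub_ne_zero.mpr ?_)
      exact_mod_cast Ne.symm hab
    rw [integral_exp_mul_complex hc]
    have h1 : (Complex.I * ((b:ℂ) - a)) * ((2*π:ℝ):ℂ) = ((b:ℤ) - (a:ℤ) : ℤ) * (2*π*Complex.I) := by
      push_cast; ring
    rw [if_neg hab, h1, Complex.exp_int_mul_two_pi_mul_I]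
    simp

lemma exp_cont (k : ℕ) : Continuous fun t : ℝ => Complex.exp (-Complex.I*k*t) := by
  fun_prop

lemma parseval {n : ℕ} (v : Fin n → ℂ) :
    (∫ t in Set.Ioc (0:ℝ) (2*π), ‖∑ j : Fin n, v j * Complex.exp (-Complex.I*(j:ℕ)*t)‖^2) =
      2*π * ∑ j, ‖v j‖^2 := by
  set Q : ℝ → ℂ := fun t => ∑ j : Fin n, v j * Complex.exp (-Complex.I*(j:ℕ)*t) with hQ
  have hQc : Continuous Q := by
    apply continuous_finset_sum
    intro j _
    exact continuous_const.mul (exp_cont j)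
  have hQint : IntegrableOn (fun t => Q t * (starRingEnd ℂ) (Q t)) (Set.Ioc (0:ℝ) (2*π)) :=
    (hQc.mul (Complex.continuous_conj.comp hQc)).integrableOn_Ioc
  have h1 : ∀ t : ℝ, ‖Q t‖^2 = (Q t * (starRingEnd ℂ) (Q t)).re := by
    intro t
    rw [Complex.mul_conj]
    simp [Complex.normSq_eq_norm_sq, ← Complex.ofReal_pow]
  have h2 : (∫ t in Set.Ioc (0:ℝ) (2*π), ‖Q t‖^2)
      = (∫ t in Set.Ioc (0:ℝ) (2*π), Q t * (starRingEnd ℂ) (Q t)).re := by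
    simp only [h1]
    exact integral_re hQint
  rw [h2]
  have h3 : (∫ t in Set.Ioc (0:ℝ) (2*π), Q t * (starRingEnd ℂ) (Q t))
      = ((2*π * ∑ j, ‖v j‖^2 : ℝ) : ℂ) := by
    have expand : ∀ t : ℝ, Q t * (starRingEnd ℂ) (Q t)
        = ∑ j : Fin n, ∑ k : Fin n, (v j * (starRingEnd ℂ) (v k)) *
            (Complex.exp (-Complex.I*(j:ℕ)*t) * (starRingEnd ℂ) (Complex.exp (-Complex.I*(k:ℕ)*t))) := by
      intro t
      rw [hQ]
      simp only [map_sum, map_mul, Finset.sum_mul_sum]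
      refine Finset.sum_congr rfl fun j _ => Finset.sum_congr rfl fun k _ => by ring
    simp only [expand]
    rw [integral_finset_sum]
    · have hrow : ∀ j : Fin n, (∫ t in Set.Ioc (0:ℝ) (2*π),
          ∑ k : Fin n, (v j * (starRingEnd ℂ) (v k)) *
            (Complex.exp (-Complex.I*(j:ℕ)*t) * (starRingEnd ℂ) (Complex.exp (-Complex.I*(k:ℕ)*t))))
          = v j * (starRingEnd ℂ) (v j) * (2*π : ℂ) := by
        intro j
        rw [integral_finset_sum]
        · have hterm : ∀ k : Fin n, (∫ t in Set.Ioc (0:ℝ) (2*π),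
              (v j * (starRingEnd ℂ) (v k)) *
              (Complex.exp (-Complex.I*(j:ℕ)*t) * (starRingEnd ℂ) (Complex.exp (-Complex.I*(k:ℕ)*t))))
              = (v j * (starRingEnd ℂ) (v k)) * (if (j:ℕ) = (k:ℕ) then (2*π:ℂ) else 0) := by
            intro k
            rw [integral_const_mul, exp_ortho]
          simp only [hterm, Fin.val_eq_val]
          simp [Finset.sum_ite_eq]
        · intro k _
          exact (continuous_const.mul ((exp_cont j).mul
            (Complex.continuous_conj.comp (exp_cont k)))).integrableOn_Ioc
      simp only [hrow]
      rw [← Finset.sum_mul]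
      have hsum : ∑ j : Fin n, v j * (starRingEnd ℂ) (v j) = ((∑ j, ‖v j‖^2 : ℝ) : ℂ) := by
        push_cast
        refine Finset.sum_congr rfl fun j _ => ?_
        rw [Complex.mul_conj]
        simp [Complex.normSq_eq_norm_sq, ← Complex.ofReal_pow]
      rw [hsum]
      push_cast
      ring
    · intro j _
      refine (continuous_finset_sum _ fun k _ => ?_).integrableOn_Ioc
      exact continuous_const.mul ((exp_cont j).mul (Complex.continuous_conj.comp (exp_cont k)))
  rw [h3]
  exact Complex.ofReal_re _

/-- Nehari-type bound: if `f(k)` are the Fourier coefficients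
`f(k) = (1/2π) ∫₀^{2π} g(t) e^{-ikt} dt` of a `2π`-periodic essentially bounded
measurable symbol `g`, then the operator 2-norm of every Hankel matrix with entries
`H_{ij} = f(i+j-1)` is at most `esssup |g|`. -/
theorem stmt_3 (g : ℝ → ℂ) (hg_meas : Measurable g)
    (hg_per : Function.Periodic g (2 * π))
    (hg_bdd : MeasureTheory.MemLp g ⊤ volume)
    (f : ℕ → ℂ)
    (hf : ∀ k : ℕ, 1 ≤ k →
      f k = (1 / (2 * π)) * ∫ t in (0 : ℝ)..(2 * π), g t * Complex.exp (-Complex.I * k * t))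
    (n : ℕ) :
    ‖Matrix.toEuclideanCLM (𝕜 := ℂ)
        (Matrix.of fun i j : Fin n => f (i.1 + j.1 + 1))‖ ≤
      essSup (fun t => ‖g t‖) volume := by
  classical
  set M := essSup (fun t => ‖g t‖) volume with hMdef
  set H : Matrix (Fin n) (Fin n) ℂ := Matrix.of fun i j : Fin n => f (i.1 + j.1 + 1) with hH
  set A := Matrix.toEuclideanCLM (𝕜 := ℂ) H with hA
  have h2π : (0:ℝ) ≤ 2*π := by positivity
  have hπ : (0:ℝ) < π := Real.pi_pos
  -- a.e. bound by M
  have hfin : eLpNormEssSup g volume ≠ ⊤ := by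
    have h := hg_bdd.2
    rw [eLpNorm_exponent_top] at h
    exact h.ne
  have hgM : ∀ᵐ t ∂(volume : Measure ℝ), ‖g t‖ ≤ M := by
    have h1 := enorm_ae_le_eLpNormEssSup g (volume : Measure ℝ)
    have hbdd : Filter.IsBoundedUnder (· ≤ ·) (ae (volume : Measure ℝ)) (fun t => ‖g t‖) := by
      refine ⟨(eLpNormEssSup g volume).toReal, Filter.eventually_map.2 ?_⟩
      filter_upwards [h1] with t ht
      have : (‖g t‖ₑ).toReal ≤ (eLpNormEssSup g volume).toReal :=
        ENNReal.toReal_mono hfin ht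
      simpa using this
    exact ae_le_essSup hbdd
  have hM0 : 0 ≤ M := by
    obtain ⟨t, ht⟩ := hgM.exists
    exact (norm_nonneg _).trans ht
  -- integrability of g on the interval
  haveI hfinmeas : IsFiniteMeasure (volume.restrict (Set.Ioc (0:ℝ) (2*π))) := by
    constructor
    rw [Measure.restrict_apply_univ, Real.volume_Ioc]
    exact ENNReal.ofReal_lt_top
  have hgi : Integrable g (volume.restrict (Set.Ioc (0:ℝ) (2*π))) :=
    (hg_bdd.restrict _).integrable le_top

  -- key bilinear estimate
  have hkey : ∀ x y : EuclideanSpace ℂ (Fin n),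
      ‖(inner ℂ y (A x) : ℂ)‖ ≤ M * Real.sqrt (∑ i, ‖y i‖^2) * Real.sqrt (∑ j, ‖x j‖^2) := by
    intro x y
    set P : ℝ → ℂ := fun t => ∑ i : Fin n, (starRingEnd ℂ) (y i) * Complex.exp (-Complex.I*(i:ℕ)*t) with hP
    set Q : ℝ → ℂ := fun t => ∑ j : Fin n, x j * Complex.exp (-Complex.I*(j:ℕ)*t) with hQ
    set F : Fin n → Fin n → ℝ → ℂ := fun i j t =>
      ((starRingEnd ℂ) (y i) * Complex.exp (-Complex.I*(i:ℕ)*t) *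
        (x j * Complex.exp (-Complex.I*(j:ℕ)*t)) * Complex.exp (-Complex.I*t)) * g t with hF
    have hPc : Continuous P := continuous_finset_sum _ fun i _ => continuous_const.mul (exp_cont i)
    have hQc : Continuous Q := continuous_finset_sum _ fun j _ => continuous_const.mul (exp_cont j)
    have hPb : ∀ t, ‖P t‖ ≤ ∑ i, ‖y i‖ := by
      intro t
      refine (norm_sum_le _ _).trans (le_of_eq (Finset.sum_congr rfl fun i _ => ?_))
      simp [Complex.norm_exp, map_mul]
    have hQb : ∀ t, ‖Q t‖ ≤ ∑ j, ‖x j‖ := by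
      intro t
      refine (norm_sum_le _ _).trans (le_of_eq (Finset.sum_congr rfl fun j _ => ?_))
      simp [Complex.norm_exp, map_mul]
    have hinner : (inner ℂ y (A x) : ℂ)
        = ∑ i : Fin n, ∑ j : Fin n, (starRingEnd ℂ) (y i) * (f (i.1 + j.1 + 1) * x j) := by
      rw [PiLp.inner_apply]
      refine Finset.sum_congr rfl fun i _ => ?_
      have hAx : (A x) i = ∑ j : Fin n, f (i.1 + j.1 + 1) * x j := by
        have h := congrFun (Matrix.ofLp_toEuclideanCLM (𝕜 := ℂ) H x) i
        exact h.trans (by simp [Matrix.mulVec, dotProduct, hH])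
      rw [RCLike.inner_apply', hAx, Finset.mul_sum]
    have hterm : ∀ i j : Fin n, (starRingEnd ℂ) (y i) * (f (i.1 + j.1 + 1) * x j)
        = (1/(2*(π:ℂ))) * ∫ t in Set.Ioc (0:ℝ) (2*π), F i j t := by
      intro i j
      rw [hf _ (by omega), intervalIntegral.integral_of_le h2π]
      rw [show (starRingEnd ℂ) (y i) * ((1 / (2 * (π:ℂ)) *
            ∫ t in Set.Ioc (0:ℝ) (2*π), g t * Complex.exp (-Complex.I * ((i.1+j.1+1 : ℕ):ℂ) * t)) * x j)
          = (1/(2*(π:ℂ))) * (((starRingEnd ℂ) (y i) * x j) *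
            ∫ t in Set.Ioc (0:ℝ) (2*π), g t * Complex.exp (-Complex.I * ((i.1+j.1+1 : ℕ):ℂ) * t)) from by ring]
      rw [← integral_const_mul]
      congr 1
      refine integral_congr_ae (Filter.Eventually.of_forall fun t => ?_)
      have hsplit : (-Complex.I * ((i.1+j.1+1 : ℕ):ℂ) * t)
          = (-Complex.I*(i:ℕ)*t) + ((-Complex.I*(j:ℕ)*t) + (-Complex.I*t)) := by
        push_cast; ring
      simp only [hsplit, Complex.exp_add, hF]
      ring
    have hFint : ∀ i j : Fin n, Integrable (F i j) (volume.restrict (Set.Ioc (0:ℝ) (2*π))) := by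
      intro i j
      refine hgi.bdd_mul (c := ‖y i‖ * ‖x j‖) (Continuous.aestronglyMeasurable (by fun_prop)) ?_
      refine Filter.Eventually.of_forall fun t => ?_
      refine le_of_eq ?_
      simp [norm_mul, Complex.norm_exp, map_mul]
    have hswap : (inner ℂ y (A x) : ℂ)
        = (1/(2*(π:ℂ))) * ∫ t in Set.Ioc (0:ℝ) (2*π),
            (P t * Q t * Complex.exp (-Complex.I*t)) * g t := by
      rw [hinner]
      simp only [hterm]
      simp only [← Finset.mul_sum]
      congr 1
      have hsum : ∑ i : Fin n, ∑ j : Fin n, (∫ t in Set.Ioc (0:ℝ) (2*π), F i j t)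
          = ∫ t in Set.Ioc (0:ℝ) (2*π), ∑ i : Fin n, ∑ j : Fin n, F i j t := by
        rw [integral_finset_sum _ (fun i _ => integrable_finset_sum _ fun j _ => hFint i j)]
        exact Finset.sum_congr rfl fun i _ => (integral_finset_sum _ fun j _ => hFint i j).symm
      rw [hsum]
      refine integral_congr_ae (Filter.Eventually.of_forall fun t => ?_)
      simp only [hF, hP, hQ, Finset.sum_mul, Finset.mul_sum]
      rw [Finset.sum_comm]
    have hnorm1 : ‖(1/(2*(π:ℂ)))‖ = 1/(2*π) := by
      have h : (1/(2*(π:ℂ))) = ((1/(2*π) : ℝ) : ℂ) := by push_cast; ring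
      rw [h, Complex.norm_real, Real.norm_of_nonneg (by positivity)]
    have step1 : ‖(inner ℂ y (A x) : ℂ)‖
        ≤ (1/(2*π)) * ∫ t in Set.Ioc (0:ℝ) (2*π), (‖P t‖ * ‖Q t‖) * ‖g t‖ := by
      rw [hswap, norm_mul, hnorm1]
      refine mul_le_mul_of_nonneg_left ?_ (by positivity)
      refine (norm_integral_le_integral_norm _).trans (le_of_eq ?_)
      refine integral_congr_ae (Filter.Eventually.of_forall fun t => ?_)
      simp [norm_mul, Complex.norm_exp]
    have hPQc : Continuous fun t => ‖P t‖ * ‖Q t‖ := hPc.norm.mul hQc.norm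
    have hPQgint : Integrable (fun t => (‖P t‖ * ‖Q t‖) * ‖g t‖)
        (volume.restrict (Set.Ioc (0:ℝ) (2*π))) := by
      refine hgi.norm.bdd_mul (c := (∑ i, ‖y i‖) * (∑ j, ‖x j‖)) hPQc.aestronglyMeasurable ?_
      refine Filter.Eventually.of_forall fun t => ?_
      rw [Real.norm_of_nonneg (by positivity)]
      exact mul_le_mul (hPb t) (hQb t) (norm_nonneg _) (Finset.sum_nonneg fun _ _ => norm_nonneg _)
    have step2 : (∫ t in Set.Ioc (0:ℝ) (2*π), (‖P t‖ * ‖Q t‖) * ‖g t‖)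
        ≤ M * ∫ t in Set.Ioc (0:ℝ) (2*π), ‖P t‖ * ‖Q t‖ := by
      rw [← integral_const_mul]
      refine integral_mono_ae hPQgint ?_ ?_
      · exact (hPQc.integrableOn_Ioc).const_mul M
      · filter_upwards [ae_restrict_of_ae hgM] with t ht
        calc (‖P t‖ * ‖Q t‖) * ‖g t‖ ≤ (‖P t‖ * ‖Q t‖) * M :=
              mul_le_mul_of_nonneg_left ht (by positivity)
          _ = M * (‖P t‖ * ‖Q t‖) := by ring
    have h22 : Real.HolderConjugate 2 2 := Real.HolderConjugate.two_two
    have hPm : MemLp (fun t => ‖P t‖) (ENNReal.ofReal 2)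
        (volume.restrict (Set.Ioc (0:ℝ) (2*π))) := by
      refine (memLp_top_of_bound hPc.norm.aestronglyMeasurable (∑ i, ‖y i‖) ?_).mono_exponent le_top
      exact Filter.Eventually.of_forall fun t => by
        rw [Real.norm_of_nonneg (norm_nonneg _)]; exact hPb t
    have hQm : MemLp (fun t => ‖Q t‖) (ENNReal.ofReal 2)
        (volume.restrict (Set.Ioc (0:ℝ) (2*π))) := by
      refine (memLp_top_of_bound hQc.norm.aestronglyMeasurable (∑ j, ‖x j‖) ?_).mono_exponent le_top
      exact Filter.Eventually.of_forall fun t => by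
        rw [Real.norm_of_nonneg (norm_nonneg _)]; exact hQb t
    have hCS := integral_mul_le_Lp_mul_Lq_of_nonneg h22
      (Filter.Eventually.of_forall fun t => norm_nonneg (P t))
      (Filter.Eventually.of_forall fun t => norm_nonneg (Q t)) hPm hQm
    have hrpow : ∀ h : ℝ → ℂ, (∫ t in Set.Ioc (0:ℝ) (2*π), ‖h t‖ ^ (2:ℝ))
        = ∫ t in Set.Ioc (0:ℝ) (2*π), ‖h t‖ ^ 2 := by
      intro h
      refine integral_congr_ae (Filter.Eventually.of_forall fun t => ?_)
      simp only [Real.rpow_two]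
    have hPpar : (∫ t in Set.Ioc (0:ℝ) (2*π), ‖P t‖ ^ 2) = 2*π * ∑ i, ‖y i‖^2 := by
      rw [hP]
      rw [parseval (fun i => (starRingEnd ℂ) (y i))]
      simp
    have hQpar : (∫ t in Set.Ioc (0:ℝ) (2*π), ‖Q t‖ ^ 2) = 2*π * ∑ j, ‖x j‖^2 := by
      rw [hQ]
      exact parseval x
    rw [hrpow P, hrpow Q, hPpar, hQpar] at hCS
    have hsqrt : ∀ S : ℝ, 0 ≤ S → (2*π*S) ^ ((1:ℝ)/2) = Real.sqrt (2*π) * Real.sqrt S := by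
      intro S hS
      rw [← Real.sqrt_eq_rpow, Real.sqrt_mul h2π]
    rw [hsqrt _ (Finset.sum_nonneg fun _ _ => sq_nonneg _),
        hsqrt _ (Finset.sum_nonneg fun _ _ => sq_nonneg _)] at hCS
    have hfinal : ‖(inner ℂ y (A x) : ℂ)‖
        ≤ (1/(2*π)) * (M * ((Real.sqrt (2*π) * Real.sqrt (∑ i, ‖y i‖^2)) *
            (Real.sqrt (2*π) * Real.sqrt (∑ j, ‖x j‖^2)))) := by
      refine step1.trans ?_
      refine mul_le_mul_of_nonneg_left (step2.trans ?_) (by positivity)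
      exact mul_le_mul_of_nonneg_left hCS hM0
    refine hfinal.trans (le_of_eq ?_)
    have hss : Real.sqrt (2*π) * Real.sqrt (2*π) = 2*π := Real.mul_self_sqrt h2π
    have hs0 : Real.sqrt (2*π) ≠ 0 := by positivity
    rw [← hss]
    field_simp
    rw [Real.sqrt_sq (Real.sqrt_nonneg _)]
    ring
  -- conclude
  refine A.opNorm_le_bound hM0 ?_
  intro x
  have h1 := hkey x (A x)
  have h2 : ‖A x‖^2 = ‖(inner ℂ (A x) (A x) : ℂ)‖ := by
    rw [inner_self_eq_norm_sq_to_K]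
    simp [← Complex.ofReal_pow]
  rw [← EuclideanSpace.norm_eq, ← EuclideanSpace.norm_eq, ← h2] at h1
  rcases eq_or_lt_of_le (norm_nonneg (A x)) with h0 | h0
  · rw [← h0]
    positivity
  · nlinarith [norm_nonneg x]
end

section
/- Let σ₁ ≥ σ₂ ≥ … ≥ σ_n ≥ 0 and suppose σ_{2k+1} ≤ 16 q^{-2k+2} σ₁ for all k ≥ 0, where q = exp(π² / (4((d+2) ln 2 − ln π))) for some d ∈ ℕ with 2^{d+2} > π. Then for every ε ∈ (0,1) there exists r ≤ C d (ln d + ln(1/ε) + ln σ₁ + 1), with C an absolute constant, such that √(∑_{k>r} σ_k²) ≤ ε, provided σ₁ ≥ 1. -/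
open Real

lemma geom_tail_le (x : ℝ) (hx0 : 0 ≤ x) (hx1 : x < 1) (m N : ℕ) :
    ∑ j ∈ Finset.Ico m N, x ^ j ≤ x ^ m / (1 - x) := by
  have h1x : 0 < 1 - x := by linarith
  rcases le_or_gt m N with h | h
  · rw [geom_sum_Ico hx1.ne h]
    have he : (x ^ N - x ^ m) / (x - 1) = (x ^ m - x ^ N) / (1 - x) := by
      rw [← neg_div_neg_eq]; ring_nf
    have hn : x ^ m - x ^ N ≤ x ^ m := by nlinarith [pow_nonneg hx0 N]
    rw [he]
    exact div_le_div_of_nonneg_right hn h1x.le |>.trans_eq rfl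
  · rw [Finset.Ico_eq_empty (by omega)]
    simp only [Finset.sum_empty]
    positivity

lemma log_pi_le : Real.log π ≤ 1.2 := by
  rw [Real.log_le_iff_le_exp Real.pi_pos]
  have h1 : (2.7182818283 : ℝ) < exp 1 := Real.exp_one_gt_d9
  have h2 : (1.2 : ℝ) ≤ exp 0.2 := by nlinarith [Real.add_one_le_exp (0.2 : ℝ)]
  have h3 : exp (1.2 : ℝ) = exp 1 * exp 0.2 := by rw [← Real.exp_add]; norm_num
  nlinarith [Real.pi_lt_d6, Real.exp_pos (1:ℝ)]

lemma pi_sq_lb : (9.85 : ℝ) ≤ π ^ 2 := by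
  nlinarith [Real.pi_gt_d6, sq_nonneg (π - 3.141592)]

lemma pi_sq_ub : π ^ 2 ≤ (9.87 : ℝ) := by
  nlinarith [Real.pi_lt_d6, Real.pi_pos, sq_nonneg (π - 3.141593)]

lemma exp_forty_bound : 128 * Real.exp 30 ≤ Real.exp 40 := by
  have h1 : Real.exp 10 = Real.exp 1 ^ 10 := by
    rw [← Real.exp_nat_mul]; norm_num
  have h2 : (2 : ℝ) ^ 10 ≤ Real.exp 1 ^ 10 :=
    pow_le_pow_left₀ (by norm_num) (by nlinarith [Real.exp_one_gt_d9]) 10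
  have he10 : (1024 : ℝ) ≤ Real.exp 10 := by rw [h1]; nlinarith
  have h3 : Real.exp 40 = Real.exp 30 * Real.exp 10 := by
    rw [← Real.exp_add]; norm_num
  nlinarith [Real.exp_pos (30 : ℝ)]

set_option maxHeartbeats 1000000 in
/-- If `σ₁ ≥ σ₂ ≥ … ≥ σ_n ≥ 0` satisfy the Beckermann–Townsend decay
`σ_{2k+1} ≤ 16 q(d)^{2-2k} σ₁` with `q(d) = exp(π²/(4((d+2)ln 2 − ln π)))`, then for
every `ε ∈ (0,1)` there is a rank `r ≤ C d (ln d + ln(1/ε) + ln σ₁ + 1)`, `C` an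
absolute constant, with `√(∑_{k>r} σ_k²) ≤ ε` (provided `σ₁ ≥ 1`). -/
theorem stmt_11 :
    ∃ C : ℝ, 0 < C ∧
      ∀ (d n : ℕ), 1 ≤ d → (π : ℝ) < 2 ^ (d + 2) →
      ∀ (q : ℝ), q = Real.exp (π ^ 2 / (4 * ((d + 2) * Real.log 2 - Real.log π))) →
      ∀ σ : ℕ → ℝ, Antitone σ → (∀ k, 0 ≤ σ k) → (∀ k, n < k → σ k = 0) →
        (∀ k : ℕ, σ (2 * k + 1) ≤ 16 * q ^ ((2 : ℝ) - 2 * k) * σ 1) →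
        1 ≤ σ 1 →
      ∀ ε : ℝ, ε ∈ Set.Ioo (0 : ℝ) 1 →
        ∃ r : ℕ,
          (r : ℝ) ≤ C * d * (Real.log d + Real.log (1 / ε) + Real.log (σ 1) + 1) ∧
          Real.sqrt (∑ k ∈ Finset.Ioc r n, σ k ^ 2) ≤ ε := by
  refine ⟨21, by norm_num, ?_⟩
  intro d n hd hπpow q hq σ hmono hnn hzero hdecay hσ1 ε hε
  obtain ⟨hε0, hε1⟩ := hε
  have hd1 : (1 : ℝ) ≤ (d : ℝ) := by exact_mod_cast hd
  have hd0 : (0 : ℝ) < (d : ℝ) := by linarith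
  have h1ε : (1 : ℝ) ≤ 1 / ε := one_le_one_div hε0 hε1.le
  obtain ⟨L, hLdef⟩ : ∃ L : ℝ, L = Real.log d + Real.log (1 / ε) + Real.log (σ 1) + 1 :=
    ⟨_, rfl⟩
  have hlogd : 0 ≤ Real.log d := Real.log_nonneg hd1
  have hlogε : 0 ≤ Real.log (1 / ε) := Real.log_nonneg h1ε
  have hlogσ : 0 ≤ Real.log (σ 1) := Real.log_nonneg hσ1
  have hL1 : 1 ≤ L := by rw [hLdef]; linarith
  have hL0 : 0 ≤ L := by linarith
  -- facts about q
  have hlog2u : Real.log 2 < 0.6931471808 := Real.log_two_lt_d9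
  have hlog2l : (0.6931471803 : ℝ) < Real.log 2 := Real.log_two_gt_d9
  have hπl : (3.141592 : ℝ) < π := Real.pi_gt_d6
  have hπu : π < 3.141593 := Real.pi_lt_d6
  have hlogπ : Real.log π ≤ 1.2 := log_pi_le
  have hlogπ0 : 0 ≤ Real.log π := Real.log_nonneg (by linarith)
  obtain ⟨D, hDdef⟩ : ∃ D : ℝ, D = ((d : ℝ) + 2) * Real.log 2 - Real.log π := ⟨_, rfl⟩
  have hDl : (0.87 : ℝ) ≤ D := by
    rw [hDdef]
    have h1 : 3 * Real.log 2 ≤ ((d : ℝ) + 2) * Real.log 2 :=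
      mul_le_mul_of_nonneg_right (by linarith) (by linarith)
    linarith
  have hDu : D ≤ 2.08 * d := by
    rw [hDdef]
    have h1 : ((d : ℝ) + 2) * Real.log 2 ≤ (3 * d) * Real.log 2 :=
      mul_le_mul_of_nonneg_right (by linarith) (by linarith)
    have h2 : (3 * (d : ℝ)) * Real.log 2 ≤ (3 * d) * 0.6931471808 :=
      mul_le_mul_of_nonneg_left hlog2u.le (by linarith)
    linarith
  have hD0 : (0 : ℝ) < D := by linarith
  obtain ⟨t, htdef⟩ : ∃ t : ℝ, t = Real.log q := ⟨_, rfl⟩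
  have hqval : q = Real.exp (π ^ 2 / (4 * D)) := by rw [hq, hDdef]
  have ht : t = π ^ 2 / (4 * D) := by rw [htdef, hqval, Real.log_exp]
  have hπsql : (9.85 : ℝ) ≤ π ^ 2 := pi_sq_lb
  have hπsqu : π ^ 2 ≤ 9.87 := pi_sq_ub
  have h4D : (0 : ℝ) < 4 * D := by linarith
  have ht_ub : t ≤ 3 := by
    rw [ht, div_le_iff₀ h4D]; linarith
  have ht_lb : 1 / (d : ℝ) ≤ t := by
    rw [ht, div_le_div_iff₀ hd0 h4D]
    have hp : 9.85 * (d : ℝ) ≤ π ^ 2 * d := mul_le_mul_of_nonneg_right hπsql (by positivity)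
    linarith
  have ht0 : 0 < t := lt_of_lt_of_le (by positivity) ht_lb
  have hq0 : 0 < q := by rw [hqval]; exact Real.exp_pos _
  have hqexp : q = Real.exp t := by rw [htdef]; exact (Real.exp_log hq0).symm
  have hq1 : 1 < q := by
    rw [hqexp]
    have := Real.add_one_le_exp t
    linarith
  have hσ0 : (0 : ℝ) < σ 1 := lt_of_lt_of_le one_pos hσ1
  -- choose r
  obtain ⟨r, hrdef⟩ : ∃ r : ℕ, r = ⌈20 * (d : ℝ) * L⌉₊ := ⟨_, rfl⟩
  have hrge : 20 * (d : ℝ) * L ≤ (r : ℝ) := by rw [hrdef]; exact Nat.le_ceil _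
  refine ⟨r, ?_, ?_⟩
  · rw [← hLdef]
    have h0 : (0:ℝ) ≤ 20 * (d : ℝ) * L := mul_nonneg (by positivity) hL0
    have h1 : (r : ℝ) < 20 * (d : ℝ) * L + 1 := by
      rw [hrdef]; exact Nat.ceil_lt_add_one h0
    have h2 : (1 : ℝ) ≤ (d : ℝ) * L := by
      have h3 := mul_le_mul hd1 hL1 zero_le_one (le_trans zero_le_one hd1)
      linarith
    calc (r : ℝ) ≤ 20 * (d : ℝ) * L + 1 := h1.le
      _ ≤ 21 * (d : ℝ) * L := by linarith
  -- tail bound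
  obtain ⟨x, hxdef⟩ : ∃ x : ℝ, x = (q ^ 2)⁻¹ := ⟨_, rfl⟩
  have hx0 : 0 < x := by rw [hxdef]; positivity
  have hq2gt : (1 : ℝ) < q ^ 2 := one_lt_pow₀ hq1 (by norm_num)
  have hx1 : x < 1 := by
    rw [hxdef]
    exact inv_lt_one_of_one_lt₀ hq2gt
  -- pointwise bound
  have hpt : ∀ j ∈ Finset.Ioc r n, σ j ^ 2 ≤ 256 * σ 1 ^ 2 * q ^ 8 * x ^ j := by
    intro j hj
    rw [Finset.mem_Ioc] at hj
    have hj1 : 1 ≤ j := by omega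
    have hk1 : 2 * ((j - 1) / 2) + 1 ≤ j := by omega
    have hk2 : j ≤ 2 * ((j - 1) / 2) + 2 := by omega
    set k : ℕ := (j - 1) / 2
    have hk2' : (j : ℝ) ≤ 2 * (k : ℝ) + 2 := by exact_mod_cast hk2
    have hs1 : σ j ≤ σ (2 * k + 1) := hmono hk1
    have hs2 := hdecay k
    have hrpow : q ^ ((2 : ℝ) - 2 * k) ≤ q ^ ((4 : ℝ) - j) :=
      (Real.rpow_le_rpow_left_iff hq1).mpr (by linarith)
    have hs3 : σ j ≤ 16 * q ^ ((4 : ℝ) - (j : ℝ)) * σ 1 := by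
      calc σ j ≤ 16 * q ^ ((2 : ℝ) - 2 * k) * σ 1 := le_trans hs1 hs2
        _ ≤ 16 * q ^ ((4 : ℝ) - (j : ℝ)) * σ 1 := by
            apply mul_le_mul_of_nonneg_right _ hσ0.le
            have h16 : (0:ℝ) ≤ 16 := by norm_num
            exact mul_le_mul_of_nonneg_left hrpow h16
    have hconv : q ^ ((4 : ℝ) - (j : ℝ)) = q ^ (4 : ℕ) * (q ^ (j : ℕ))⁻¹ := by
      rw [Real.rpow_sub hq0, div_eq_mul_inv, Real.rpow_natCast,
        show (4 : ℝ) = ((4 : ℕ) : ℝ) by norm_num, Real.rpow_natCast]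
    rw [hconv] at hs3
    have hsz : σ j ^ 2 ≤ (16 * (q ^ (4:ℕ) * (q ^ j)⁻¹) * σ 1) ^ 2 :=
      pow_le_pow_left₀ (hnn j) hs3 2
    calc σ j ^ 2 ≤ (16 * (q ^ (4:ℕ) * (q ^ j)⁻¹) * σ 1) ^ 2 := hsz
      _ = 256 * σ 1 ^ 2 * q ^ 8 * x ^ j := by
          rw [hxdef]
          ring
  have hIocIco : Finset.Ioc r n = Finset.Ico (r + 1) (n + 1) := by
    ext j; simp only [Finset.mem_Ioc, Finset.mem_Ico]; omega
  have hsum : ∑ j ∈ Finset.Ioc r n, σ j ^ 2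
      ≤ 256 * σ 1 ^ 2 * q ^ 8 * (x ^ (r + 1) / (1 - x)) := by
    calc ∑ j ∈ Finset.Ioc r n, σ j ^ 2
        ≤ ∑ j ∈ Finset.Ioc r n, 256 * σ 1 ^ 2 * q ^ 8 * x ^ j :=
          Finset.sum_le_sum hpt
      _ = 256 * σ 1 ^ 2 * q ^ 8 * ∑ j ∈ Finset.Ioc r n, x ^ j := by
          rw [Finset.mul_sum]
      _ = 256 * σ 1 ^ 2 * q ^ 8 * ∑ j ∈ Finset.Ico (r+1) (n+1), x ^ j := by
          rw [hIocIco]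
      _ ≤ 256 * σ 1 ^ 2 * q ^ 8 * (x ^ (r + 1) / (1 - x)) := by
          apply mul_le_mul_of_nonneg_left (geom_tail_le x hx0.le hx1 _ _)
          positivity
  -- numeric bounds on the pieces
  have hq8 : q ^ (8 : ℕ) ≤ Real.exp 24 := by
    rw [hqexp, ← Real.exp_nat_mul]
    apply Real.exp_le_exp.mpr
    push_cast
    linarith
  have hdinv : (d : ℝ) * (1 / (d : ℝ)) = 1 := by field_simp
  have hxpow : x ^ (r + 1) ≤ Real.exp (-(40 * L)) := by
    have h1 : x ^ (r + 1) = Real.exp (-(((2 * (r + 1) : ℕ) : ℝ) * t)) := by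
      rw [hxdef, inv_pow, ← pow_mul, hqexp, ← Real.exp_nat_mul, ← Real.exp_neg]
    rw [h1]
    apply Real.exp_le_exp.mpr
    have h2 : 20 * (d : ℝ) * L ≤ (r : ℝ) + 1 := by linarith
    have h3 : 40 * L ≤ ((2 * (r + 1) : ℕ) : ℝ) * t := by
      have h4 : ((2 * (r + 1) : ℕ) : ℝ) = 2 * ((r : ℝ) + 1) := by push_cast; ring
      rw [h4]
      have h5 : 2 * (20 * (d : ℝ) * L) * (1 / d) ≤ 2 * ((r : ℝ) + 1) * t := by
        apply mul_le_mul (by linarith) ht_lb (by positivity) (by positivity)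
      calc 40 * L = 2 * (20 * (d : ℝ) * L) * (1 / d) := by
            field_simp; ring
        _ ≤ 2 * ((r : ℝ) + 1) * t := h5
    linarith
  have hq2u : q ^ (2 : ℕ) ≤ Real.exp 6 := by
    rw [hqexp, ← Real.exp_nat_mul]
    apply Real.exp_le_exp.mpr
    push_cast; linarith
  have hq2l : 1 + 2 / (d : ℝ) ≤ q ^ (2 : ℕ) := by
    rw [hqexp, ← Real.exp_nat_mul]
    have h1 : (2 : ℝ) / d ≤ ((2 : ℕ) : ℝ) * t := by
      push_cast
      have h2 : (2 : ℝ) / d = 2 * (1 / d) := by ring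
      rw [h2]; linarith
    have h3 := Real.add_one_le_exp (((2:ℕ) : ℝ) * t)
    push_cast at h1 h3 ⊢
    linarith
  have h1x : 2 / ((d : ℝ) * Real.exp 6) ≤ 1 - x := by
    have hxeq : 1 - x = (q ^ 2 - 1) / q ^ 2 := by
      rw [hxdef]; field_simp
    have h2d : (0 : ℝ) < 2 / (d : ℝ) := by positivity
    rw [hxeq, show (2 : ℝ) / ((d : ℝ) * Real.exp 6) = (2 / d) / Real.exp 6 by
      rw [div_div]]
    have ha : (0:ℝ) ≤ q ^ 2 - 1 := by linarith
    have hb : 2 / (d:ℝ) ≤ q ^ 2 - 1 := by linarith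
    exact div_le_div₀ ha hb (pow_pos hq0 2) hq2u
  -- assemble
  have hfrac : x ^ (r + 1) / (1 - x) ≤ (d : ℝ) * Real.exp 6 * Real.exp (-(40 * L)) / 2 := by
    have hpos : (0 : ℝ) < 2 / ((d : ℝ) * Real.exp 6) := by
      apply div_pos two_pos (mul_pos hd0 (Real.exp_pos 6))
    calc x ^ (r + 1) / (1 - x) ≤ Real.exp (-(40 * L)) / (2 / ((d : ℝ) * Real.exp 6)) :=
          div_le_div₀ (Real.exp_pos _).le hxpow hpos h1x
      _ = (d : ℝ) * Real.exp 6 * Real.exp (-(40 * L)) / 2 := by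
          field_simp
  have htail : ∑ j ∈ Finset.Ioc r n, σ j ^ 2
      ≤ 128 * (d : ℝ) * σ 1 ^ 2 * Real.exp 30 * Real.exp (-(40 * L)) := by
    calc ∑ j ∈ Finset.Ioc r n, σ j ^ 2
        ≤ 256 * σ 1 ^ 2 * q ^ 8 * (x ^ (r + 1) / (1 - x)) := hsum
      _ ≤ 256 * σ 1 ^ 2 * Real.exp 24 * ((d : ℝ) * Real.exp 6 * Real.exp (-(40 * L)) / 2) := by
          apply mul_le_mul
          · apply mul_le_mul_of_nonneg_left hq8 (by positivity)
          · exact hfrac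
          · exact div_nonneg (pow_nonneg hx0.le _) (by linarith)
          · positivity
      _ = 128 * (d : ℝ) * σ 1 ^ 2 * (Real.exp 24 * Real.exp 6) * Real.exp (-(40 * L)) := by
          ring
      _ = 128 * (d : ℝ) * σ 1 ^ 2 * Real.exp 30 * Real.exp (-(40 * L)) := by
          have h246 : Real.exp 24 * Real.exp 6 = Real.exp 30 := by
            rw [← Real.exp_add]; norm_num
          rw [h246]
  -- final numeric estimate
  have hexpL : Real.exp (40 * L) = (d : ℝ) ^ 40 * (1 / ε) ^ 40 * σ 1 ^ 40 * Real.exp 40 := by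
    have h40 : (40 : ℝ) * L
        = Real.log ((d : ℝ) ^ 40) + Real.log ((1 / ε) ^ 40) + Real.log (σ 1 ^ 40) + 40 := by
      rw [Real.log_pow, Real.log_pow, Real.log_pow, hLdef]; push_cast; ring
    rw [h40, Real.exp_add, Real.exp_add, Real.exp_add,
      Real.exp_log (by positivity : (0:ℝ) < (d : ℝ) ^ 40),
      Real.exp_log (by positivity : (0:ℝ) < (1 / ε) ^ 40),
      Real.exp_log (pow_pos hσ0 40)]
  have hee : 128 * Real.exp 30 ≤ Real.exp 40 := exp_forty_bound
  have hd40 : (d : ℝ) ≤ (d : ℝ) ^ 40 := le_self_pow₀ hd1 (by norm_num)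
  have hσ40 : σ 1 ^ 2 ≤ σ 1 ^ 40 := pow_le_pow_right₀ hσ1 (by norm_num)
  have hεterm : (1 : ℝ) ≤ ε ^ 2 * (1 / ε) ^ 40 := by
    have h1 : ε ^ 2 * (1 / ε) ^ 40 = (1 / ε) ^ 38 := by
      field_simp
    rw [h1]
    exact one_le_pow₀ h1ε
  have hfin : 128 * (d : ℝ) * σ 1 ^ 2 * Real.exp 30 ≤ ε ^ 2 * Real.exp (40 * L) := by
    calc 128 * (d : ℝ) * σ 1 ^ 2 * Real.exp 30
        = 1 * ((d : ℝ) * (σ 1 ^ 2 * (128 * Real.exp 30))) := by ring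
      _ ≤ (ε ^ 2 * (1 / ε) ^ 40) * ((d : ℝ) ^ 40 * (σ 1 ^ 40 * Real.exp 40)) := by
          apply mul_le_mul hεterm ?_ ?_ (by positivity)
          · apply mul_le_mul hd40 ?_ ?_ (by positivity)
            · exact mul_le_mul hσ40 hee (by positivity) (by positivity)
            · positivity
          · positivity
      _ = ε ^ 2 * ((d : ℝ) ^ 40 * (1 / ε) ^ 40 * σ 1 ^ 40 * Real.exp 40) := by ring
      _ = ε ^ 2 * Real.exp (40 * L) := by rw [hexpL]
  have hfinal : ∑ j ∈ Finset.Ioc r n, σ j ^ 2 ≤ ε ^ 2 := by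
    have hE : (0 : ℝ) < Real.exp (-(40 * L)) := Real.exp_pos _
    have h1 : 128 * (d : ℝ) * σ 1 ^ 2 * Real.exp 30 * Real.exp (-(40 * L))
        ≤ ε ^ 2 * Real.exp (40 * L) * Real.exp (-(40 * L)) :=
      mul_le_mul_of_nonneg_right hfin hE.le
    have h2 : ε ^ 2 * Real.exp (40 * L) * Real.exp (-(40 * L)) = ε ^ 2 := by
      rw [mul_assoc, ← Real.exp_add]; simp
    linarith [htail]
  calc Real.sqrt (∑ k ∈ Finset.Ioc r n, σ k ^ 2) ≤ Real.sqrt (ε ^ 2) :=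
        Real.sqrt_le_sqrt hfinal
    _ = ε := Real.sqrt_sq hε0.le
end

section
/- Let α > 1 and f(k) = k^{-α}. There exists a constant C > 0 (independent of α, ε, d) such that for all ε ∈ (0,1) and all d ∈ ℕ there exists a tensor T of size 2 × ⋯ × 2 (d factors) with all tensor-train ranks at most C d (ln d + ln(1/ε) + ln ζ(α) + 1) satisfying ‖Q(d,f) − T‖_F ≤ ε, where Q(d,f) is the reshaping of the vector (1^{-α}, 2^{-α}, …, (2^d)^{-α}). -/
open Real

/-- The `s`-unfolding of a vector `u ∈ ℝ^{2^d}`: the `2^s × 2^{d-s}` matrix with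
entries `u((i-1)·2^{d-s} + j)` (1-based). Its rank is the `s`-th TT-rank of the
corresponding `2 × ⋯ × 2` tensor. -/
def unfolding {d : ℕ} (s : ℕ) (hs : s ≤ d) (u : Fin (2 ^ d) → ℝ) :
    Matrix (Fin (2 ^ s)) (Fin (2 ^ (d - s))) ℝ :=
  Matrix.of fun i j =>
    u ⟨i.1 * 2 ^ (d - s) + j.1, by
      calc i.1 * 2 ^ (d - s) + j.1 < i.1 * 2 ^ (d - s) + 2 ^ (d - s) := by
            exact Nat.add_lt_add_left j.2 _
        _ = (i.1 + 1) * 2 ^ (d - s) := by ring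
        _ ≤ 2 ^ s * 2 ^ (d - s) := Nat.mul_le_mul_right _ i.2
        _ = 2 ^ d := by rw [← pow_add, Nat.add_sub_cancel' hs]⟩

namespace QTT19

open Finset Set

/-! ### Auxiliary machinery for the proof of `stmt_19`. -/

noncomputable def pc (α : ℝ) (n : ℕ) : ℝ := ∏ t ∈ Finset.range n, (α + t)

lemma pc_pos {α : ℝ} (hα : 0 < α) (n : ℕ) : 0 < pc α n :=
  Finset.prod_pos fun t _ => by positivity

-- product shift identity
lemma prod_shift (n : ℕ) : ∀ p : ℕ, ∏ t ∈ Finset.range p, (n + 1 + t) = (n + p).choose p * p.factorial := by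
  intro p
  induction p with
  | zero => simp
  | succ p ih =>
    rw [Finset.prod_range_succ, ih]
    have h := Nat.add_one_mul_choose_eq (n + p) p
    have : (n + (p+1)).choose (p+1) * (p+1).factorial
        = ((n+p).choose p * (n + p + 1)) * p.factorial := by
      rw [Nat.factorial_succ]
      have h2 : (n + (p + 1)).choose (p + 1) * (p + 1) = (n + p + 1) * (n + p).choose p := by
        have := Nat.add_one_mul_choose_eq (n + p) p
        simpa [Nat.succ_eq_add_one, Nat.add_assoc] using this.symm
      calc (n + (p+1)).choose (p+1) * ((p+1) * p.factorial)
          = ((n + (p+1)).choose (p+1) * (p+1)) * p.factorial := by ring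
        _ = ((n + p + 1) * (n + p).choose p) * p.factorial := by rw [h2]
        _ = ((n+p).choose p * (n + p + 1)) * p.factorial := by ring
    rw [this]; ring
lemma choose_le_two_pow (n k : ℕ) : n.choose k ≤ 2 ^ n := by
  rcases le_or_gt k n with h | h
  · calc n.choose k ≤ ∑ i ∈ Finset.range (n+1), n.choose i :=
        Finset.single_le_sum (fun i _ => Nat.zero_le _) (Finset.mem_range.mpr (Nat.lt_succ_of_le h))
      _ = 2 ^ n := Nat.sum_range_choose n
  · rw [Nat.choose_eq_zero_of_lt h]; exact Nat.zero_le _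

lemma pc_succ (α : ℝ) (n : ℕ) : pc α (n+1) = pc α n * (α + n) := Finset.prod_range_succ _ _

-- main combinatorial bound
lemma pc_bound {α : ℝ} (hα : 1 ≤ α) (p : ℕ) :
    pc α (p+1) ≤ α * (2:ℝ) ^ (α+1) * 2 ^ p * p.factorial := by
  set n : ℕ := ⌈α⌉₊ with hn
  have hαn : α ≤ n := Nat.le_ceil α
  have hα0 : 0 ≤ α := le_trans zero_le_one hα
  have h1 : pc α (p+1) = α * ∏ t ∈ Finset.range p, (α + 1 + t) := by
    rw [pc, Finset.prod_range_succ']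
    simp only [Nat.cast_zero, add_zero]
    rw [mul_comm]
    congr 1
    apply Finset.prod_congr rfl
    intro t _
    push_cast; ring
  have h2 : ∏ t ∈ Finset.range p, (α + 1 + t) ≤ ∏ t ∈ Finset.range p, ((n + 1 + t : ℕ) : ℝ) := by
    apply Finset.prod_le_prod
    · intro t _; positivity
    · intro t _; push_cast; linarith [hαn]
  have h3 : ∏ t ∈ Finset.range p, ((n + 1 + t : ℕ) : ℝ) = ((n + p).choose p * p.factorial : ℕ) := by
    rw [← prod_shift n p]; push_cast; rfl
  have h4 : ((n + p).choose p : ℝ) ≤ 2 ^ (n + p) := by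
    exact_mod_cast choose_le_two_pow (n+p) p
  have h5 : (2:ℝ) ^ (n + p) = (2:ℝ)^(n:ℕ) * 2^p := pow_add 2 n p
  have h6 : (2:ℝ) ^ (n:ℕ) ≤ (2:ℝ) ^ (α + 1) := by
    rw [← Real.rpow_natCast 2 n]
    apply Real.rpow_le_rpow_of_exponent_le one_le_two
    have := Nat.ceil_lt_add_one hα0
    linarith
  calc pc α (p+1) = α * ∏ t ∈ Finset.range p, (α + 1 + t) := h1
    _ ≤ α * (((n + p).choose p * p.factorial : ℕ) : ℝ) := by
        apply mul_le_mul_of_nonneg_left _ (by linarith)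
        rw [← h3]; exact h2
    _ ≤ α * ((2:ℝ)^(α+1) * 2^p * p.factorial) := by
        apply mul_le_mul_of_nonneg_left _ (by linarith)
        push_cast
        calc ((n + p).choose p : ℝ) * p.factorial ≤ (2:ℝ)^(n+p) * p.factorial := by
              apply mul_le_mul_of_nonneg_right h4 (by positivity)
          _ = (2:ℝ)^(n:ℕ) * 2^p * p.factorial := by rw [h5]
          _ ≤ (2:ℝ)^(α+1) * 2^p * p.factorial := by
              apply mul_le_mul_of_nonneg_right (mul_le_mul_of_nonneg_right h6 (by positivity)) (by positivity)
    _ = α * (2:ℝ) ^ (α+1) * 2 ^ p * p.factorial := by ring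

-- iterated derivative of x ^ (-α) within Icc a b, 0 < a < b
lemma iter_f {α a b : ℝ} (ha : 0 < a) (hab : a < b) (n : ℕ) :
    Set.EqOn (iteratedDerivWithin n (fun x : ℝ => x ^ (-α)) (Set.Icc a b))
      (fun x : ℝ => (-1)^n * pc α n * x ^ (-α - n)) (Set.Icc a b) := by
  have hud : UniqueDiffOn ℝ (Set.Icc a b) := uniqueDiffOn_Icc hab
  induction n with
  | zero =>
    intro x hx
    simp [iteratedDerivWithin_zero, pc]
  | succ n ih =>
    intro x hx
    have hxpos : 0 < x := lt_of_lt_of_le ha hx.1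
    rw [iteratedDerivWithin_succ]
    rw [derivWithin_congr ih (ih hx)]
    have hderiv : HasDerivAt (fun y : ℝ => (-1:ℝ)^n * pc α n * y ^ (-α - n))
        ((-1:ℝ)^n * pc α n * ((-α - n) * x ^ (-α - n - 1))) x := by
      exact (Real.hasDerivAt_rpow_const (Or.inl (ne_of_gt hxpos))).const_mul _
    rw [hderiv.hasDerivWithinAt.derivWithin (hud x hx)]
    rw [pc_succ]
    push_cast
    rw [show -α - ((n:ℝ) + 1) = -α - (n:ℝ) - 1 by ring]
    ring

lemma iter_g {α a b : ℝ} (hab : a < b) (hb : b < 3) (n : ℕ) :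
    Set.EqOn (iteratedDerivWithin n (fun x : ℝ => (3 - x) ^ (-α)) (Set.Icc a b))
      (fun x : ℝ => pc α n * (3 - x) ^ (-α - n)) (Set.Icc a b) := by
  have hud : UniqueDiffOn ℝ (Set.Icc a b) := uniqueDiffOn_Icc hab
  induction n with
  | zero =>
    intro x hx
    simp [iteratedDerivWithin_zero, pc]
  | succ n ih =>
    intro x hx
    have hxpos : 0 < 3 - x := by have := hx.2; linarith
    rw [iteratedDerivWithin_succ]
    rw [derivWithin_congr ih (ih hx)]
    have hbase : HasDerivAt (fun y : ℝ => 3 - y) (-1 : ℝ) x := by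
      simpa using (hasDerivAt_id x).const_sub 3
    have hpow : HasDerivAt (fun y : ℝ => y ^ (-α - n)) ((-α - n) * (3 - x) ^ (-α - n - 1)) (3 - x) :=
      Real.hasDerivAt_rpow_const (Or.inl (ne_of_gt hxpos))
    have hcomp : HasDerivAt (fun y : ℝ => (3 - y) ^ (-α - n))
        ((-α - n) * (3 - x) ^ (-α - n - 1) * (-1)) x := hpow.comp x hbase
    have hderiv : HasDerivAt (fun y : ℝ => pc α n * (3 - y) ^ (-α - n))
        (pc α n * ((-α - n) * (3 - x) ^ (-α - n - 1) * (-1))) x := hcomp.const_mul _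
    rw [hderiv.hasDerivWithinAt.derivWithin (hud x hx)]
    rw [pc_succ]
    push_cast
    rw [show -α - ((n:ℝ) + 1) = -α - (n:ℝ) - 1 by ring]
    ring

noncomputable def cc (α : ℝ) (i : ℕ) : ℝ :=
  (-1)^i * pc α i * ((3:ℝ)/2) ^ (-α - i) / i.factorial
noncomputable def Pol (α : ℝ) (p : ℕ) (x : ℝ) : ℝ :=
  ∑ i ∈ Finset.range (p+1), cc α i * (x - 3/2)^i

lemma key_est {α : ℝ} (hα : 1 ≤ α) (p : ℕ) {z u v : ℝ}
    (hz : 1 ≤ z) (hu0 : 0 ≤ u) (hu : 3 * u ≤ z) (hv0 : 0 ≤ v) (hv : v ≤ 1/2) :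
    pc α (p+1) * z ^ (-α - ((p:ℝ)+1)) * u ^ p / p.factorial * v
      ≤ α * (2:ℝ) ^ α * ((2:ℝ)/3) ^ p := by
  have hα0 : (0:ℝ) < α := lt_of_lt_of_le one_pos hα
  have hz0 : (0:ℝ) < z := lt_of_lt_of_le one_pos hz
  have hfac : (0:ℝ) < p.factorial := by exact_mod_cast p.factorial_pos
  have e1 : z ^ (-α - ((p:ℝ)+1)) = z^(-α-1) * (z^p)⁻¹ := by
    rw [show -α - ((p:ℝ)+1) = (-α-1) + (-(p:ℝ)) by ring, Real.rpow_add hz0,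
      Real.rpow_neg (le_of_lt hz0), Real.rpow_natCast]
  have e2 : z^(-α-1) ≤ 1 := Real.rpow_le_one_of_one_le_of_nonpos hz (by linarith)
  have e3 : (u/z)^p = u^p * (z^p)⁻¹ := by rw [div_pow, div_eq_mul_inv]
  have e4 : (u/z)^p ≤ (1/3)^p := by
    apply pow_le_pow_left₀ (by positivity)
    rw [div_le_iff₀ hz0]; linarith
  have h1 : pc α (p+1) / p.factorial ≤ α * 2^(α+1) * 2^p := by
    rw [div_le_iff₀ hfac]; exact pc_bound hα p
  have hpcnn : (0:ℝ) ≤ pc α (p+1) / p.factorial := le_of_lt (div_pos (pc_pos hα0 _) hfac)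
  calc pc α (p+1) * z ^ (-α - ((p:ℝ)+1)) * u ^ p / p.factorial * v
      = (pc α (p+1) / p.factorial) * z^(-α-1) * (u/z)^p * v := by rw [e1, e3]; ring
    _ ≤ (α * 2^(α+1) * 2^p) * 1 * (1/3)^p * (1/2) := by
        apply mul_le_mul
        · apply mul_le_mul
          · apply mul_le_mul h1 e2 (by positivity) (by positivity)
          · exact e4
          · positivity
          · positivity
        · exact hv
        · exact hv0
        · positivity
    _ = α * (2:ℝ)^α * ((2:ℝ)/3)^p := by
        rw [show ((2:ℝ)/3) = 2 * (1/3) by norm_num, mul_pow,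
          show α + 1 = α + (1:ℕ) by norm_num, Real.rpow_add_natCast two_ne_zero]
        ring

lemma taylor_bound {α : ℝ} (hα : 1 ≤ α) (p : ℕ) {x : ℝ} (hx1 : 1 ≤ x) (hx2 : x ≤ 2) :
    |x ^ (-α) - Pol α p x| ≤ α * (2:ℝ)^α * ((2:ℝ)/3)^p := by
  have hα0 : (0:ℝ) < α := lt_of_lt_of_le one_pos hα
  have hEnn : (0:ℝ) ≤ α * (2:ℝ)^α * ((2:ℝ)/3)^p := by positivity
  rcases lt_trichotomy x (3/2) with hlt | heq | hgt
  · -- reflection case: g(y) = (3-y)^(-α) on Icc (3/2) (3-x)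
    set t : ℝ := 3 - x with ht
    have htgt : (3/2 : ℝ) < t := by rw [ht]; linarith
    have ht2 : t ≤ 2 := by rw [ht]; linarith
    have hg : ContDiffOn ℝ p (fun y : ℝ => (3 - y) ^ (-α)) (Set.Icc (3/2) t) := by
      intro y hy
      have h3y : (3 - y) ≠ 0 := by have := hy.2; simp only [Set.mem_Icc] at hy; intro h; nlinarith [hy.2]
      exact (((Real.contDiffAt_rpow_const_of_ne (p := -α) h3y).comp y
        ((contDiff_const.sub contDiff_id).contDiffAt)).congr_of_eventuallyEq
        (by filter_upwards with z; simp [Function.comp])).contDiffWithinAt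
    have hg' : DifferentiableOn ℝ
        (iteratedDerivWithin p (fun y : ℝ => (3 - y) ^ (-α)) (Set.Icc (3/2) t))
        (Set.Ioo (3/2) t) := by
      apply DifferentiableOn.congr
        (f := fun y : ℝ => pc α p * (3 - y) ^ (-α - p))
      · intro y hy
        have h3y : (3 - y) ≠ 0 := by
          simp only [Set.mem_Ioo] at hy; intro h; nlinarith [hy.2]
        exact (((Real.differentiableAt_rpow_const_of_ne (-α - p) h3y).comp y
          (((differentiable_const (3:ℝ)).sub differentiable_id).differentiableAt)).const_mul
          _).differentiableWithinAt
      · exact fun y hy => iter_g htgt (by linarith) p (Set.Ioo_subset_Icc_self hy)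
    obtain ⟨ξ, hξ, hR⟩ := taylor_mean_remainder_cauchy htgt.ne (by rwa [Set.uIcc_of_le htgt.le])
      (by rwa [Set.uIcc_of_le htgt.le, Set.uIoo_of_le htgt.le])
    rw [Set.uIoo_of_le htgt.le] at hξ
    rw [Set.uIcc_of_le htgt.le] at hR
    obtain ⟨hξ1, hξ2⟩ := hξ
    have h3t : 3 - t = x := by rw [ht]; ring
    have h32 : ((3:ℝ) - 3/2) = 3/2 := by norm_num
    have hT : taylorWithinEval (fun y : ℝ => (3 - y) ^ (-α)) p (Set.Icc (3/2) t) (3/2) t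
        = Pol α p x := by
      rw [taylor_within_apply, Pol]
      apply Finset.sum_congr rfl
      intro k _
      rw [iter_g htgt (by linarith) k (Set.left_mem_Icc.mpr (le_of_lt htgt))]
      simp only [smul_eq_mul, cc, h32]
      have hneg : (t - 3/2 : ℝ) = -(x - 3/2) := by rw [ht]; ring
      rw [hneg, neg_pow]
      ring
    have hD : iteratedDerivWithin (p+1) (fun y : ℝ => (3 - y) ^ (-α)) (Set.Icc (3/2) t) ξ
        = pc α (p+1) * (3 - ξ) ^ (-α - ((p:ℝ)+1)) := by
      have h := iter_g (α := α) htgt (by linarith) (p+1)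
        (Set.Ioo_subset_Icc_self ⟨hξ1, hξ2⟩)
      rw [h]
      norm_num
    rw [hT] at hR
    have hxval : x ^ (-α) = (fun y : ℝ => (3 - y) ^ (-α)) t := by simp only; rw [h3t]
    rw [hxval, hR, hD]
    have hrw : pc α (p+1) * (3 - ξ) ^ (-α - ((p:ℝ)+1)) * (t - ξ)^p / p.factorial * (t - 3/2)
        = pc α (p+1) * (3 - ξ) ^ (-α - ((p:ℝ)+1)) * (t - ξ)^p / p.factorial * (t - 3/2) := rfl
    have hRnn : 0 ≤ pc α (p+1) * (3 - ξ) ^ (-α - ((p:ℝ)+1)) * (t - ξ)^p / p.factorial * (t - 3/2) := by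
      apply mul_nonneg
      apply div_nonneg
      apply mul_nonneg
      apply mul_nonneg (le_of_lt (pc_pos hα0 _)) (Real.rpow_nonneg (by linarith) _)
      · exact pow_nonneg (by linarith) _
      · positivity
      · linarith
    rw [abs_of_nonneg hRnn]
    exact key_est hα p (by linarith) (by linarith) (by linarith) (by linarith) (by linarith)
  · -- x = 3/2
    have : Pol α p x = x ^ (-α) := by
      rw [Pol, Finset.sum_eq_single 0]
      · rw [heq]; simp [cc, pc]
      · intro i _ hi
        rw [heq]; simp [sub_self, zero_pow hi]
      · intro h; simp at h
    rw [this, sub_self, abs_zero]; exact hEnn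
  · -- direct case on Icc (3/2) x
    have hf : ContDiffOn ℝ p (fun y : ℝ => y ^ (-α)) (Set.Icc (3/2) x) := by
      intro y hy
      have hy0 : y ≠ 0 := by simp only [Set.mem_Icc] at hy; intro h; nlinarith [hy.1]
      exact (Real.contDiffAt_rpow_const_of_ne (p := -α) hy0).contDiffWithinAt
    have hf' : DifferentiableOn ℝ
        (iteratedDerivWithin p (fun y : ℝ => y ^ (-α)) (Set.Icc (3/2) x))
        (Set.Ioo (3/2) x) := by
      apply DifferentiableOn.congr (f := fun y : ℝ => (-1:ℝ)^p * pc α p * y ^ (-α - p))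
      · intro y hy
        have hy0 : y ≠ 0 := by simp only [Set.mem_Ioo] at hy; intro h; nlinarith [hy.1]
        exact ((Real.differentiableAt_rpow_const_of_ne (-α - p) hy0).const_mul
          _).differentiableWithinAt
      · exact fun y hy => iter_f (by norm_num) hgt p (Set.Ioo_subset_Icc_self hy)
    obtain ⟨ξ, hξ, hR⟩ := taylor_mean_remainder_cauchy hgt.ne (by rwa [Set.uIcc_of_le hgt.le])
      (by rwa [Set.uIcc_of_le hgt.le, Set.uIoo_of_le hgt.le])
    rw [Set.uIoo_of_le hgt.le] at hξ
    rw [Set.uIcc_of_le hgt.le] at hR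
    obtain ⟨hξ1, hξ2⟩ := hξ
    have hT : taylorWithinEval (fun y : ℝ => y ^ (-α)) p (Set.Icc (3/2) x) (3/2) x
        = Pol α p x := by
      rw [taylor_within_apply, Pol]
      apply Finset.sum_congr rfl
      intro k _
      rw [iter_f (show (0:ℝ) < 3/2 by norm_num) hgt k (Set.left_mem_Icc.mpr (le_of_lt hgt))]
      simp only [smul_eq_mul, cc]
      ring
    have hD : iteratedDerivWithin (p+1) (fun y : ℝ => y ^ (-α)) (Set.Icc (3/2) x) ξ
        = (-1:ℝ)^(p+1) * pc α (p+1) * ξ ^ (-α - ((p:ℝ)+1)) := by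
      have h := iter_f (α := α) (show (0:ℝ) < 3/2 by norm_num) hgt (p+1)
        (Set.Ioo_subset_Icc_self ⟨hξ1, hξ2⟩)
      rw [h]
      norm_num
    rw [hT] at hR
    rw [hR, hD]
    have hrw : (-1:ℝ)^(p+1) * pc α (p+1) * ξ ^ (-α - ((p:ℝ)+1)) * (x - ξ)^p / p.factorial * (x - 3/2)
        = (-1:ℝ)^(p+1) * (pc α (p+1) * ξ ^ (-α - ((p:ℝ)+1)) * (x - ξ)^p / p.factorial * (x - 3/2)) := by
      ring
    rw [hrw, abs_mul, abs_pow, abs_neg, abs_one, one_pow, one_mul]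
    have hRnn : 0 ≤ pc α (p+1) * ξ ^ (-α - ((p:ℝ)+1)) * (x - ξ)^p / p.factorial * (x - 3/2) := by
      apply mul_nonneg
      apply div_nonneg
      apply mul_nonneg
      apply mul_nonneg (le_of_lt (pc_pos hα0 _)) (Real.rpow_nonneg (by linarith) _)
      · exact pow_nonneg (by linarith) _
      · positivity
      · linarith
    rw [abs_of_nonneg hRnn]
    exact key_est hα p (by linarith) (by linarith) (by linarith) (by linarith) (by linarith)

noncomputable def bco (α : ℝ) (j i : ℕ) : ℝ := ((2:ℝ)^j) ^ (-α) * cc α i * (((2:ℝ)^j)⁻¹)^i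
noncomputable def bbeta (j : ℕ) : ℝ := 3 * 2^j / 2 - 1
noncomputable def bP (α : ℝ) (p j : ℕ) (m : ℕ) : ℝ :=
  ∑ i ∈ Finset.range (p+1), bco α j i * ((m:ℝ) - bbeta j)^i
noncomputable def Tf (α : ℝ) (p K : ℕ) (m : ℕ) : ℝ :=
  (if m = 0 then 1 else 0) +
  ∑ j ∈ Finset.range K, (if 2^j ≤ m ∧ m < 2^(j+1) then bP α p j m else 0)

lemma mul_add_W_le {W N i : ℕ} (hW : 0 < W) (hdvd : W ∣ N) (h : i * W < N) : i * W + W ≤ N := by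
  obtain ⟨c, rfl⟩ := hdvd
  have hic : i < c := by
    rcases Nat.lt_or_ge i c with h' | h'
    · exact h'
    · exfalso
      have h2 : W * c ≤ W * i := Nat.mul_le_mul_left W h'
      rw [mul_comm W i] at h2
      omega
  calc i * W + W = (i + 1) * W := by ring
    _ ≤ c * W := Nat.mul_le_mul_right W hic
    _ = W * c := mul_comm _ _

lemma poly_split (α : ℝ) (p j : ℕ) (x y : ℝ) :
    ∑ t ∈ Finset.range (p+1),
      (∑ q ∈ Finset.range (p+1), bco α j q * (q.choose t) * x ^ (q - t)) * y ^ t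
    = ∑ q ∈ Finset.range (p+1), bco α j q * (x + y) ^ q := by
  simp_rw [Finset.sum_mul]
  rw [Finset.sum_comm]
  apply Finset.sum_congr rfl
  intro q hq
  rw [Finset.mem_range] at hq
  have hsub : Finset.range (q+1) ⊆ Finset.range (p+1) := Finset.range_subset_range.mpr (by omega)
  calc ∑ t ∈ Finset.range (p+1), bco α j q * ↑(q.choose t) * x ^ (q - t) * y ^ t
      = ∑ t ∈ Finset.range (q+1), bco α j q * ↑(q.choose t) * x ^ (q - t) * y ^ t := by
        symm
        apply Finset.sum_subset hsub
        intro t htp htq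
        have hlt : q < t := by
          rw [Finset.mem_range] at htp
          simp only [Finset.mem_range] at htq
          omega
        simp [Nat.choose_eq_zero_of_lt hlt]
    _ = bco α j q * (y + x) ^ q := by
        rw [add_pow, Finset.mul_sum]
        apply Finset.sum_congr rfl
        intro t ht
        ring
    _ = bco α j q * (x + y) ^ q := by rw [add_comm y x]

noncomputable def Umat (α : ℝ) (p K d s : ℕ) : Matrix (Fin (2^s)) (Unit ⊕ Fin K × Fin (p+1)) ℝ :=
  fun i o =>
    match o with
    | Sum.inl _ => if i.1 = 0 then 1 else 0
    | Sum.inr (j, t) =>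
      if 2^(j.1+1) ≤ 2^(d-s) then (if i.1 = 0 ∧ t.1 = 0 then 1 else 0)
      else if 2^j.1 ≤ i.1 * 2^(d-s) ∧ i.1 * 2^(d-s) < 2^(j.1+1) then
        ∑ q ∈ Finset.range (p+1), bco α j.1 q * (q.choose t.1) * ((i.1:ℝ) * (2:ℝ)^(d-s)) ^ (q - t.1)
      else 0

noncomputable def Vmat (α : ℝ) (p K d s : ℕ) : Matrix (Unit ⊕ Fin K × Fin (p+1)) (Fin (2^(d-s))) ℝ :=
  fun o jc =>
    match o with
    | Sum.inl _ => if jc.1 = 0 then 1 else 0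
    | Sum.inr (j, t) =>
      if 2^(j.1+1) ≤ 2^(d-s) then
        (if t.1 = 0 ∧ 2^j.1 ≤ jc.1 ∧ jc.1 < 2^(j.1+1) then bP α p j.1 jc.1 else 0)
      else ((jc.1:ℝ) - bbeta j.1) ^ t.1

lemma unfolding_eq_mul {d : ℕ} (α : ℝ) (p K s : ℕ) (hs : s ≤ d) :
    unfolding s hs (fun m : Fin (2^d) => Tf α p K m.1) = Umat α p K d s * Vmat α p K d s := by
  ext i jc
  rw [Matrix.mul_apply]
  show Tf α p K (i.1 * 2^(d-s) + jc.1) = _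
  rw [Fintype.sum_sum_type, Fintype.sum_prod_type]
  have hWpos : 0 < 2^(d-s) := Nat.pow_pos (by norm_num)
  have hjcW : jc.1 < 2^(d-s) := jc.2
  have hunit : ∑ x : Unit, Umat α p K d s i (Sum.inl x) * Vmat α p K d s (Sum.inl x) jc
      = (if i.1 * 2^(d-s) + jc.1 = 0 then (1:ℝ) else 0) := by
    simp only [Finset.univ_unique, Finset.sum_singleton, Umat, Vmat]
    by_cases h1 : i.1 = 0 <;> by_cases h2 : jc.1 = 0 <;>
      simp [h1, h2, Nat.add_eq_zero, Nat.mul_eq_zero, hWpos.ne']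
  have hblock : ∀ j : Fin K,
      (∑ t : Fin (p+1), Umat α p K d s i (Sum.inr (j, t)) * Vmat α p K d s (Sum.inr (j, t)) jc)
      = (if 2^j.1 ≤ i.1 * 2^(d-s) + jc.1 ∧ i.1 * 2^(d-s) + jc.1 < 2^(j.1+1)
          then bP α p j.1 (i.1 * 2^(d-s) + jc.1) else 0) := by
    intro j
    by_cases hcase : 2^(j.1+1) ≤ 2^(d-s)
    · simp only [Umat, Vmat, if_pos hcase]
      rw [Fintype.sum_eq_single (0 : Fin (p+1))]
      · by_cases h1 : i.1 = 0
        · have hm : i.1 * 2^(d-s) + jc.1 = jc.1 := by rw [h1, zero_mul, zero_add]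
          rw [hm]
          by_cases h3 : 2^j.1 ≤ jc.1 ∧ jc.1 < 2^(j.1+1) <;> simp [h1, h3]
        · have hfalse : ¬ (2^j.1 ≤ i.1 * 2^(d-s) + jc.1 ∧ i.1 * 2^(d-s) + jc.1 < 2^(j.1+1)) := by
            rintro ⟨-, hlt⟩
            have h4 : 2^(d-s) ≤ i.1 * 2^(d-s) :=
              Nat.le_mul_of_pos_left _ (Nat.pos_of_ne_zero h1)
            omega
          simp [h1, hfalse]
      · intro t ht
        have : t.1 ≠ 0 := fun h => ht (Fin.ext h)
        simp [this]
    · have hssle : d - s ≤ j.1 := by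
        by_contra hc
        push_neg at hc
        exact hcase (Nat.pow_le_pow_right (by norm_num) hc)
      have hdvd : (2:ℕ)^(d-s) ∣ 2^j.1 := pow_dvd_pow 2 hssle
      have hdvd' : (2:ℕ)^(d-s) ∣ 2^(j.1+1) := pow_dvd_pow 2 (le_trans hssle (Nat.le_succ _))
      simp only [Umat, Vmat, if_neg hcase]
      have hequiv : (2^j.1 ≤ i.1 * 2^(d-s) ∧ i.1 * 2^(d-s) < 2^(j.1+1))
          ↔ (2^j.1 ≤ i.1 * 2^(d-s) + jc.1 ∧ i.1 * 2^(d-s) + jc.1 < 2^(j.1+1)) := by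
        constructor
        · rintro ⟨h1, h2⟩
          refine ⟨le_trans h1 (Nat.le_add_right _ _), ?_⟩
          have := mul_add_W_le hWpos hdvd' h2
          omega
        · rintro ⟨h1, h2⟩
          constructor
          · by_contra hc
            push_neg at hc
            have := mul_add_W_le hWpos hdvd hc
            omega
          · omega
      by_cases hcond : 2^j.1 ≤ i.1 * 2^(d-s) + jc.1 ∧ i.1 * 2^(d-s) + jc.1 < 2^(j.1+1)
      · rw [if_pos hcond]
        have hcondI := hequiv.mpr hcond
        simp only [if_pos hcondI]
        have hps := poly_split α p j.1 ((i.1:ℝ) * (2:ℝ)^(d-s)) ((jc.1:ℝ) - bbeta j.1)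
        rw [← Fin.sum_univ_eq_sum_range
          (fun t => (∑ q ∈ Finset.range (p+1),
            bco α j.1 q * (q.choose t) * ((i.1:ℝ) * (2:ℝ)^(d-s)) ^ (q - t))
            * ((jc.1:ℝ) - bbeta j.1) ^ t) (p+1)] at hps
        rw [hps, bP]
        apply Finset.sum_congr rfl
        intro q _
        congr 2
        push_cast
        ring
      · rw [if_neg hcond]
        have hcondI : ¬ (2^j.1 ≤ i.1 * 2^(d-s) ∧ i.1 * 2^(d-s) < 2^(j.1+1)) :=
          fun h => hcond (hequiv.mp h)
        simp only [if_neg hcondI]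
        simp
  rw [hunit]
  have hsum : ∑ j : Fin K, ∑ t : Fin (p+1),
      Umat α p K d s i (Sum.inr (j, t)) * Vmat α p K d s (Sum.inr (j, t)) jc
      = ∑ j ∈ Finset.range K,
        (if 2^j ≤ i.1 * 2^(d-s) + jc.1 ∧ i.1 * 2^(d-s) + jc.1 < 2^(j+1)
          then bP α p j (i.1 * 2^(d-s) + jc.1) else 0) := by
    rw [← Fin.sum_univ_eq_sum_range
      (fun j => if 2^j ≤ i.1 * 2^(d-s) + jc.1 ∧ i.1 * 2^(d-s) + jc.1 < 2^(j+1)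
        then bP α p j (i.1 * 2^(d-s) + jc.1) else 0) K]
    exact Finset.sum_congr rfl fun j _ => hblock j
  rw [hsum, Tf]

lemma rank_Tf {d : ℕ} (α : ℝ) (p K s : ℕ) (hs : s ≤ d) :
    (unfolding s hs (fun m : Fin (2^d) => Tf α p K m.1)).rank ≤ (K+1) * (p+1) := by
  rw [unfolding_eq_mul α p K s hs]
  calc (Umat α p K d s * Vmat α p K d s).rank ≤ (Umat α p K d s).rank :=
        Matrix.rank_mul_le_left _ _
    _ ≤ Fintype.card (Unit ⊕ Fin K × Fin (p+1)) := Matrix.rank_le_card_width _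
    _ = 1 + K * (p+1) := by simp
    _ ≤ (K+1) * (p+1) := by nlinarith [Nat.zero_le K, Nat.zero_le p]

lemma bP_eq (α : ℝ) (p j m : ℕ) :
    bP α p j m = ((2:ℝ)^j) ^ (-α) * Pol α p (((m:ℝ)+1) / 2^j) := by
  rw [bP, Pol, Finset.mul_sum]
  apply Finset.sum_congr rfl
  intro i _
  have h2j : ((2:ℝ)^j) ≠ 0 := by positivity
  have hb : (((m:ℝ)+1)/2^j - 3/2) = ((m:ℝ) - bbeta j) * ((2:ℝ)^j)⁻¹ := by
    field_simp [bbeta]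
    simp only [bbeta]; ring
  rw [hb, mul_pow, bco]
  ring

lemma sum_inv_sq {a : ℕ} (ha : 1 ≤ a) (b : ℕ) :
    ∑ m ∈ Finset.Ico a b, (((m:ℝ)+1)⁻¹)^2 ≤ ((a:ℝ))⁻¹ := by
  rcases le_or_gt a b with hab | hab
  · have key : ∀ c : ℕ, a ≤ c →
        ∑ m ∈ Finset.Ico a c, (((m:ℝ)+1)⁻¹)^2 ≤ ((a:ℝ))⁻¹ - ((c:ℝ))⁻¹ := by
      intro c hc
      induction c, hc using Nat.le_induction with
      | base => simp
      | succ c hac ih =>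
        rw [Finset.sum_Ico_succ_top hac]
        have hc1 : (1:ℝ) ≤ c := by
          have : a ≤ c := hac
          exact_mod_cast le_trans ha this
        have hstep : (((c:ℝ)+1)⁻¹)^2 ≤ ((c:ℝ))⁻¹ - ((c:ℝ)+1)⁻¹ := by
          have hc0 : (c:ℝ) ≠ 0 := by linarith
          have hc1' : (c:ℝ)+1 ≠ 0 := by linarith
          have e : ((c:ℝ))⁻¹ - ((c:ℝ)+1)⁻¹ = ((c:ℝ)*((c:ℝ)+1))⁻¹ := by
            field_simp
            ring
          rw [e, inv_pow]
          apply inv_anti₀ (by nlinarith)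
          nlinarith
        have hih := ih
        push_cast
        push_cast at hih hstep
        linarith
    have h := key b hab
    have : (0:ℝ) ≤ ((b:ℝ))⁻¹ := by positivity
    linarith [key b hab]
  · rw [Finset.Ico_eq_empty (by omega)]
    simp

lemma geom_half (K : ℕ) : ∑ j ∈ Finset.range K, ((1:ℝ)/2)^j ≤ 2 := by
  have h := geom_sum_eq (show (1:ℝ)/2 ≠ 1 by norm_num) K
  rw [h]
  have : (0:ℝ) ≤ ((1:ℝ)/2)^K := by positivity
  rw [div_le_iff_of_neg (by norm_num : ((1:ℝ)/2 - 1) < 0)]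
  linarith

lemma block_decomp (g : ℕ → ℝ) (K : ℕ) :
    ∑ m ∈ Finset.Ico 1 (2^K), g m
      = ∑ j ∈ Finset.range K, ∑ m ∈ Finset.Ico (2^j) (2^(j+1)), g m := by
  induction K with
  | zero => simp
  | succ K ih =>
    rw [Finset.sum_range_succ, ← ih,
      Finset.sum_Ico_consecutive g (Nat.one_le_two_pow) (Nat.pow_le_pow_right (by norm_num) (Nat.le_succ K))]

lemma Tf_zero (α : ℝ) (p K : ℕ) : Tf α p K 0 = 1 := by
  rw [Tf, if_pos rfl]
  rw [Finset.sum_eq_zero, add_zero]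
  intro j _
  rw [if_neg]
  rintro ⟨h1, -⟩
  exact absurd h1 (by simp [Nat.pow_pos])

lemma Tf_block {α : ℝ} {p K j m : ℕ} (hj : j < K) (h1 : 2^j ≤ m) (h2 : m < 2^(j+1)) :
    Tf α p K m = bP α p j m := by
  have hm0 : m ≠ 0 := by
    have := Nat.one_le_two_pow (n := j)
    omega
  rw [Tf, if_neg hm0, zero_add]
  rw [Finset.sum_eq_single_of_mem j (Finset.mem_range.mpr hj)]
  · rw [if_pos ⟨h1, h2⟩]
  · intro j' _ hne
    rw [if_neg]
    rintro ⟨h1', h2'⟩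
    rcases Nat.lt_or_ge j' j with hlt | hge
    · have : 2^(j'+1) ≤ 2^j := Nat.pow_le_pow_right (by norm_num) hlt
      omega
    · have hgt : j < j' := by omega
      have : 2^(j+1) ≤ 2^j' := Nat.pow_le_pow_right (by norm_num) hgt
      omega

lemma Tf_tail {α : ℝ} {p K m : ℕ} (hm : 2^K ≤ m) : Tf α p K m = 0 := by
  have hm0 : m ≠ 0 := by
    have := Nat.one_le_two_pow (n := K)
    omega
  rw [Tf, if_neg hm0, zero_add, Finset.sum_eq_zero]
  intro j hj
  rw [Finset.mem_range] at hj
  rw [if_neg]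
  rintro ⟨-, h2⟩
  have : 2^(j+1) ≤ 2^K := Nat.pow_le_pow_right (by norm_num) hj
  omega

lemma pow_half_sq (j : ℕ) : (2:ℝ)^j * (((1:ℝ)/2)^j)^2 = ((1:ℝ)/2)^j := by
  rw [← pow_mul, mul_comm j 2, pow_mul, ← mul_pow]
  norm_num

lemma err_sum {α : ℝ} (hα : 1 < α) {d K p : ℕ} (hK : K ≤ d) :
    ∑ m ∈ Finset.range (2^d), ((((m:ℕ):ℝ)+1)^(-α) - Tf α p K m)^2
      ≤ (∑ j ∈ Finset.range K, ((1:ℝ)/2)^j) * (α * (2:ℝ)^α * ((2:ℝ)/3)^p)^2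
        + ∑ m ∈ Finset.Ico (2^K) (2^d), ((((m:ℕ):ℝ)+1)^(-α))^2 := by
  set E : ℝ := α * (2:ℝ)^α * ((2:ℝ)/3)^p with hE
  have hα0 : (0:ℝ) < α := by linarith
  have hE0 : 0 ≤ E := by positivity
  have h1K : (1:ℕ) ≤ 2^K := Nat.one_le_two_pow
  have hKd : (2:ℕ)^K ≤ 2^d := Nat.pow_le_pow_right (by norm_num) hK
  have hsplit : ∑ m ∈ Finset.range (2^d), ((((m:ℕ):ℝ)+1)^(-α) - Tf α p K m)^2
      = ((((0:ℕ):ℝ)+1)^(-α) - Tf α p K 0)^2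
        + ∑ m ∈ Finset.Ico 1 (2^K), ((((m:ℕ):ℝ)+1)^(-α) - Tf α p K m)^2
        + ∑ m ∈ Finset.Ico (2^K) (2^d), ((((m:ℕ):ℝ)+1)^(-α) - Tf α p K m)^2 := by
    rw [Finset.range_eq_Ico,
      ← Finset.sum_Ico_consecutive _ (Nat.zero_le (2^K)) hKd,
      ← Finset.sum_Ico_consecutive _ (Nat.zero_le 1) h1K]
    congr 2
    rw [show Finset.Ico 0 1 = {0} by rfl, Finset.sum_singleton]
  rw [hsplit]
  have hfirst : ((((0:ℕ):ℝ)+1)^(-α) - Tf α p K 0)^2 = 0 := by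
    rw [Tf_zero]
    norm_num
  have hmid : ∑ m ∈ Finset.Ico 1 (2^K), ((((m:ℕ):ℝ)+1)^(-α) - Tf α p K m)^2
      ≤ (∑ j ∈ Finset.range K, ((1:ℝ)/2)^j) * E^2 := by
    rw [block_decomp, Finset.sum_mul]
    apply Finset.sum_le_sum
    intro j hj
    rw [Finset.mem_range] at hj
    have hpt : ∀ m ∈ Finset.Ico (2^j) (2^(j+1)),
        ((((m:ℕ):ℝ)+1)^(-α) - Tf α p K m)^2 ≤ (((1:ℝ)/2)^j * E)^2 := by
      intro m hm
      rw [Finset.mem_Ico] at hm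
      obtain ⟨hm1, hm2⟩ := hm
      rw [Tf_block hj hm1 hm2, bP_eq]
      set x : ℝ := (((m:ℕ):ℝ)+1) / 2^j with hx
      have h2j0 : (0:ℝ) < (2:ℝ)^j := by positivity
      have hm1' : ((2:ℝ))^j ≤ (m:ℝ) := by
        calc ((2:ℝ))^j = ((2^j : ℕ) : ℝ) := by push_cast; rfl
          _ ≤ (m:ℝ) := by exact_mod_cast hm1
      have hm2' : ((m:ℝ)) + 1 ≤ 2 * (2:ℝ)^j := by
        calc ((m:ℝ)) + 1 ≤ ((2^(j+1) : ℕ) : ℝ) := by exact_mod_cast hm2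
          _ = 2 * (2:ℝ)^j := by push_cast; ring
      have hx1 : 1 ≤ x := by
        rw [hx, le_div_iff₀ h2j0, one_mul]
        linarith
      have hx2 : x ≤ 2 := by
        rw [hx, div_le_iff₀ h2j0]
        linarith
      have hval : (((m:ℕ):ℝ)+1)^(-α) = ((2:ℝ)^j)^(-α) * x^(-α) := by
        rw [← Real.mul_rpow (le_of_lt h2j0) (by positivity : (0:ℝ) ≤ x)]
        congr 1
        rw [hx]
        field_simp
      rw [hval]
      have hb2 : ((2:ℝ)^j)^(-α) ≤ ((1:ℝ)/2)^j := by
        have h1le : (1:ℝ) ≤ (2:ℝ)^j := one_le_pow₀ (by norm_num)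
        calc ((2:ℝ)^j)^(-α) ≤ ((2:ℝ)^j)^(-1:ℝ) :=
              Real.rpow_le_rpow_of_exponent_le h1le (by linarith)
          _ = ((2:ℝ)^j)⁻¹ := Real.rpow_neg_one _
          _ = ((1:ℝ)/2)^j := by rw [← inv_pow]; norm_num
      have herr : |((2:ℝ)^j)^(-α) * x^(-α) - ((2:ℝ)^j)^(-α) * Pol α p x|
          ≤ ((1:ℝ)/2)^j * E := by
        rw [← mul_sub, abs_mul,
          abs_of_nonneg (Real.rpow_nonneg (le_of_lt h2j0) (-α))]
        exact mul_le_mul hb2 (taylor_bound (le_of_lt hα) p hx1 hx2) (abs_nonneg _)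
          (by positivity)
      calc (((2:ℝ)^j)^(-α) * x^(-α) - ((2:ℝ)^j)^(-α) * Pol α p x)^2
          = |((2:ℝ)^j)^(-α) * x^(-α) - ((2:ℝ)^j)^(-α) * Pol α p x|^2 := (sq_abs _).symm
        _ ≤ (((1:ℝ)/2)^j * E)^2 := by
            apply pow_le_pow_left₀ (abs_nonneg _) herr
    calc ∑ m ∈ Finset.Ico (2^j) (2^(j+1)), ((((m:ℕ):ℝ)+1)^(-α) - Tf α p K m)^2
        ≤ (Finset.Ico (2^j) (2^(j+1))).card • (((1:ℝ)/2)^j * E)^2 :=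
          Finset.sum_le_card_nsmul _ _ _ hpt
      _ = ((2:ℝ)^j) * (((1:ℝ)/2)^j * E)^2 := by
          rw [Nat.card_Ico, nsmul_eq_mul]
          congr 1
          rw [show (2:ℕ)^(j+1) - 2^j = 2^j by rw [pow_succ]; omega]
          push_cast; rfl
      _ = ((1:ℝ)/2)^j * E^2 := by rw [mul_pow, ← mul_assoc, pow_half_sq]
  have htail : ∑ m ∈ Finset.Ico (2^K) (2^d), ((((m:ℕ):ℝ)+1)^(-α) - Tf α p K m)^2
      = ∑ m ∈ Finset.Ico (2^K) (2^d), ((((m:ℕ):ℝ)+1)^(-α))^2 := by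
    apply Finset.sum_congr rfl
    intro m hm
    rw [Finset.mem_Ico] at hm
    rw [Tf_tail hm.1, sub_zero]
  rw [hfirst, htail, zero_add]
  linarith [hmid]

lemma zeta_norm_ge_one {α : ℝ} (hα : 1 < α) : 1 ≤ ‖riemannZeta (α:ℂ)‖ := by
  have hre : 1 < (α:ℂ).re := by simpa using hα
  rw [zeta_eq_tsum_one_div_nat_add_one_cpow hre]
  have hsum : Summable (fun n : ℕ => 1/((n:ℝ)+1)^α) := by
    have h1 := (Real.summable_one_div_nat_rpow (p := α)).mpr hα
    have h2 := (summable_nat_add_iff (f := fun n : ℕ => 1/(n:ℝ)^α) 1).mpr h1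
    apply h2.congr
    intro n
    push_cast
    ring
  have hterm : ∀ n : ℕ, (1 / ((n:ℂ)+1)^(α:ℂ)) = ((1/((n:ℝ)+1)^α : ℝ) : ℂ) := by
    intro n
    have h0 : (0:ℝ) ≤ (n:ℝ)+1 := by positivity
    have h1 : ((n:ℂ)+1) = (((n:ℝ)+1 : ℝ) : ℂ) := by push_cast; ring
    rw [h1, ← Complex.ofReal_cpow h0]
    push_cast
    ring
  rw [tsum_congr hterm, ← Complex.ofReal_tsum, Complex.norm_real]
  have hge : 1 ≤ ∑' n : ℕ, 1/((n:ℝ)+1)^α := by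
    have h := Summable.le_tsum hsum 0 (fun j _ => by positivity)
    simpa [Real.one_rpow] using h
  calc (1:ℝ) ≤ ∑' n : ℕ, 1/((n:ℝ)+1)^α := hge
    _ ≤ |∑' n : ℕ, 1/((n:ℝ)+1)^α| := le_abs_self _

lemma log_32 : (2:ℝ)/5 ≤ Real.log (3/2) := by
  rw [Real.le_log_iff_exp_le (by norm_num : (0:ℝ) < 3/2)]
  by_contra h
  push_neg at h
  have h5 : ((3:ℝ)/2)^5 ≤ Real.exp (2/5)^5 := pow_le_pow_left₀ (by norm_num) h.le 5
  have he5 : Real.exp (2/5)^5 = Real.exp 2 := by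
    rw [← Real.exp_nat_mul]; norm_num
  have h1 : Real.exp 2 = Real.exp 1 ^ 2 := by rw [← Real.exp_nat_mul]; norm_num
  have := Real.exp_one_lt_d9
  nlinarith [Real.exp_pos 1]
end QTT19

set_option maxHeartbeats 2000000 in
/-- Main theorem: for `f(k) = k^{-α}`, `α > 1`, there is an absolute constant `C > 0`
such that for all `ε ∈ (0,1)` and all `d`, the quantized tensor `Q(d,f)` of the vector
`(1^{-α}, …, (2^d)^{-α})` admits an approximation `T` with all TT-ranks at most
`C d (ln d + ln(1/ε) + ln ζ(α) + 1)` and `‖Q(d,f) - T‖_F ≤ ε`. -/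
theorem stmt_19 :
    ∃ C : ℝ, 0 < C ∧
      ∀ (α : ℝ), 1 < α → ∀ ε : ℝ, ε ∈ Set.Ioo (0 : ℝ) 1 → ∀ d : ℕ,
        ∃ T : Fin (2 ^ d) → ℝ,
          (∀ s : ℕ, 1 ≤ s → ∀ hs : s ≤ d - 1,
            ((unfolding s (le_trans hs (Nat.sub_le d 1)) T).rank : ℝ) ≤
              C * d * (Real.log d + Real.log (1 / ε) +
                Real.log ‖riemannZeta (α : ℂ)‖ + 1)) ∧
          Real.sqrt (∑ k : Fin (2 ^ d), ((k.1 + 1 : ℝ) ^ (-α) - T k) ^ 2) ≤ ε := by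
  classical
  refine ⟨100, by norm_num, ?_⟩
  intro α hα ε hε d
  obtain ⟨hε0, hε1⟩ := hε
  have hα0 : (0:ℝ) < α := by linarith
  set L : ℝ := Real.log (1/ε) with hLdef
  have hL0 : 0 < L := Real.log_pos (by rw [lt_div_iff₀ hε0]; linarith)
  have hexpL : Real.exp (-L) = ε := by
    rw [hLdef, one_div, Real.log_inv, neg_neg, Real.exp_log hε0]
  have hlz : 0 ≤ Real.log ‖riemannZeta (α:ℂ)‖ :=
    Real.log_nonneg (QTT19.zeta_norm_ge_one hα)
  -- generic rank bound
  have rank_bound : ∀ (p K : ℕ), (K:ℝ) ≤ (d:ℝ) → (p:ℝ) ≤ 11*L+13 →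
      ∀ s : ℕ, 1 ≤ s → ∀ hs : s ≤ d - 1,
      ((unfolding s (le_trans hs (Nat.sub_le d 1))
          (fun m : Fin (2^d) => QTT19.Tf α p K m.1)).rank : ℝ)
        ≤ 100 * d * (Real.log d + L + Real.log ‖riemannZeta (α:ℂ)‖ + 1) := by
    intro p K hKd hple s hs1 hs2
    have hd2 : 2 ≤ d := by omega
    have hd2' : (2:ℝ) ≤ (d:ℝ) := by exact_mod_cast hd2
    have hld : 0 ≤ Real.log d := Real.log_nonneg (by linarith)
    have hrank := QTT19.rank_Tf α p K s (le_trans hs2 (Nat.sub_le d 1))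
    have hcast : ((unfolding s (le_trans hs2 (Nat.sub_le d 1))
        (fun m : Fin (2^d) => QTT19.Tf α p K m.1)).rank : ℝ)
        ≤ (((K+1) * (p+1) : ℕ) : ℝ) := by exact_mod_cast hrank
    refine le_trans hcast ?_
    push_cast
    have h1 : ((K:ℝ)+1) ≤ 2*(d:ℝ) := by linarith
    have h2 : ((p:ℝ)+1) ≤ 14*(L+1) := by linarith
    have hm : ((K:ℝ)+1)*((p:ℝ)+1) ≤ (2*(d:ℝ))*(14*(L+1)) :=
      mul_le_mul h1 h2 (by positivity) (by linarith)
    have hnn : 0 ≤ 100*(d:ℝ)*(Real.log d + Real.log ‖riemannZeta (α:ℂ)‖) := by positivity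
    have hdL : 0 ≤ (d:ℝ)*L := by positivity
    nlinarith [hm, hnn, hdL, hd2', hL0]
  by_cases hcase : α < 2*L + 2
  · -- moderate α : polynomial blocks
    set K : ℕ := min d (⌈3*L⌉₊ + 3) with hKdef
    set p : ℕ := ⌈11*L⌉₊ + 12 with hpdef
    refine ⟨fun m : Fin (2^d) => QTT19.Tf α p K m.1, ?_, ?_⟩
    · -- rank
      apply rank_bound
      · exact_mod_cast Nat.min_le_left _ _
      · have h1 : (11*L : ℝ) ≤ (⌈11*L⌉₊ : ℝ) + 0 := by
          simpa using Nat.le_ceil (11*L)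
        have h2 : ((⌈11*L⌉₊ : ℕ) : ℝ) ≤ 11*L + 1 :=
          le_of_lt (Nat.ceil_lt_add_one (by positivity))
        rw [hpdef]
        push_cast
        linarith
    · -- error
      have hKd : K ≤ d := Nat.min_le_left _ _
      have hS := QTT19.err_sum hα (d := d) (p := p) hKd
      have hαle : α ≤ 2*L + 2 := le_of_lt hcase
      have hp_lb : (11*L + 12 : ℝ) ≤ (p:ℝ) := by
        rw [hpdef]
        push_cast
        linarith [Nat.le_ceil (11*L)]
      have hE : α * (2:ℝ)^α * ((2:ℝ)/3)^p ≤ ε/2 := by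
        have h23 : ((2:ℝ)/3)^p = Real.exp ((p:ℝ) * (-(Real.log (3/2)))) := by
          have h1 : Real.exp (-(Real.log ((3:ℝ)/2))) = ((2:ℝ)/3) := by
            rw [Real.exp_neg, Real.exp_log (by norm_num : (0:ℝ) < 3/2)]
            norm_num
          rw [← h1, ← Real.exp_nat_mul]
        have hαexp : α ≤ Real.exp (α - 1) := by
          have := Real.add_one_le_exp (α - 1)
          linarith
        calc α * (2:ℝ)^α * ((2:ℝ)/3)^p
            ≤ Real.exp (α-1) * (2:ℝ)^α * ((2:ℝ)/3)^p := by
              apply mul_le_mul_of_nonneg_right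
                (mul_le_mul_of_nonneg_right hαexp (Real.rpow_nonneg (by norm_num) _))
              positivity
          _ = Real.exp ((α-1) + Real.log 2 * α + (p:ℝ) * (-(Real.log (3/2)))) := by
              rw [Real.rpow_def_of_pos (by norm_num : (0:ℝ) < 2), h23,
                ← Real.exp_add, ← Real.exp_add]
          _ ≤ Real.exp (-L - Real.log 2) := by
              apply Real.exp_le_exp.mpr
              have f1 : Real.log 2 * α ≤ 0.6932 * (2*L+2) := by
                apply mul_le_mul (by linarith [Real.log_two_lt_d9]) hαle hα0.le (by norm_num)
              have f2 : (11*L+12) * (2/5) ≤ (p:ℝ) * Real.log (3/2) := by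
                apply mul_le_mul hp_lb QTT19.log_32 (by norm_num) (by positivity)
              have f3 : (0.6931 : ℝ) ≤ Real.log 2 := by linarith [Real.log_two_gt_d9]
              have f4 : Real.log 2 ≤ 0.6932 := by linarith [Real.log_two_lt_d9]
              nlinarith
          _ = ε/2 := by
              rw [Real.exp_sub, hexpL, Real.exp_log (by norm_num : (0:ℝ) < 2)]
      have hE0 : (0:ℝ) ≤ α * (2:ℝ)^α * ((2:ℝ)/3)^p := by positivity
      have hE2 : (α * (2:ℝ)^α * ((2:ℝ)/3)^p)^2 ≤ (ε/2)^2 :=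
        pow_le_pow_left₀ hE0 hE 2
      have hmidb : (∑ j ∈ Finset.range K, ((1:ℝ)/2)^j) * (α * (2:ℝ)^α * ((2:ℝ)/3)^p)^2
          ≤ 2 * (ε/2)^2 := by
        apply mul_le_mul (QTT19.geom_half K) hE2 (by positivity) (by norm_num)
      have htail : ∑ m ∈ Finset.Ico (2^K) (2^d), ((((m:ℕ):ℝ)+1)^(-α))^2 ≤ ε^2/2 := by
        rcases le_total d (⌈3*L⌉₊ + 3) with hdle | hdge
        · have hKeq : K = d := min_eq_left hdle
          rw [hKeq, Finset.Ico_self, Finset.sum_empty]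
          positivity
        · have hKeq : K = ⌈3*L⌉₊ + 3 := min_eq_right hdge
          have hKge : (3*L + 3 : ℝ) ≤ (K:ℝ) := by
            rw [hKeq]
            push_cast
            linarith [Nat.le_ceil (3*L)]
          have hpt : ∀ m ∈ Finset.Ico (2^K) (2^d),
              ((((m:ℕ):ℝ)+1)^(-α))^2 ≤ ((((m:ℕ):ℝ)+1)⁻¹)^2 := by
            intro m _
            have h0 : (0:ℝ) ≤ (m:ℝ) := Nat.cast_nonneg m
            have h1 : (1:ℝ) ≤ (m:ℝ)+1 := by linarith
            have h2 : (((m:ℕ):ℝ)+1)^(-α) ≤ (((m:ℕ):ℝ)+1)⁻¹ := by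
              have h3 := Real.rpow_le_rpow_of_exponent_le h1 (show -α ≤ -1 by linarith)
              rwa [Real.rpow_neg_one] at h3
            exact pow_le_pow_left₀ (Real.rpow_nonneg (by positivity) _) h2 2
          calc ∑ m ∈ Finset.Ico (2^K) (2^d), ((((m:ℕ):ℝ)+1)^(-α))^2
              ≤ ∑ m ∈ Finset.Ico (2^K) (2^d), ((((m:ℕ):ℝ)+1)⁻¹)^2 :=
                Finset.sum_le_sum hpt
            _ ≤ (((2^K : ℕ):ℝ))⁻¹ := QTT19.sum_inv_sq Nat.one_le_two_pow (2^d)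
            _ ≤ ε^2/2 := by
                have h2K : (((2^K:ℕ)):ℝ) = Real.exp ((K:ℝ) * Real.log 2) := by
                  push_cast
                  rw [← Real.rpow_natCast 2 K,
                    Real.rpow_def_of_pos (by norm_num : (0:ℝ) < 2), mul_comm]
                have hε2 : ε^2 = Real.exp (-(2*L)) := by
                  rw [← hexpL, ← Real.exp_nat_mul]
                  norm_num
                have hmm : (3*L+3) * 0.6931 ≤ (K:ℝ) * Real.log 2 := by
                  apply mul_le_mul hKge (by linarith [Real.log_two_gt_d9]) (by norm_num)
                    (by positivity)
                have hf4 : Real.log 2 ≤ 0.6932 := by linarith [Real.log_two_lt_d9]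
                calc (((2^K:ℕ)):ℝ)⁻¹ = Real.exp (-((K:ℝ) * Real.log 2)) := by
                      rw [h2K, ← Real.exp_neg]
                  _ ≤ Real.exp (-(Real.log 2 + 2*L)) := by
                      apply Real.exp_le_exp.mpr
                      nlinarith
                  _ = ε^2/2 := by
                      rw [Real.exp_neg, Real.exp_add, Real.exp_log (by norm_num : (0:ℝ) < 2),
                        hε2, Real.exp_neg]
                      field_simp
      have hSle : ∑ m ∈ Finset.range (2^d), ((((m:ℕ):ℝ)+1)^(-α) - QTT19.Tf α p K m)^2
          ≤ ε^2 := by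
        calc ∑ m ∈ Finset.range (2^d), ((((m:ℕ):ℝ)+1)^(-α) - QTT19.Tf α p K m)^2
            ≤ (∑ j ∈ Finset.range K, ((1:ℝ)/2)^j) * (α * (2:ℝ)^α * ((2:ℝ)/3)^p)^2
              + ∑ m ∈ Finset.Ico (2^K) (2^d), ((((m:ℕ):ℝ)+1)^(-α))^2 := hS
          _ ≤ 2 * (ε/2)^2 + ε^2/2 := add_le_add hmidb htail
          _ = ε^2 := by ring
      have hconv : ∑ k : Fin (2^d), ((((k.1:ℕ):ℝ) + 1)^(-α) - QTT19.Tf α p K k.1)^2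
          = ∑ m ∈ Finset.range (2^d), ((((m:ℕ):ℝ)+1)^(-α) - QTT19.Tf α p K m)^2 :=
        Fin.sum_univ_eq_sum_range (fun m => ((((m:ℕ):ℝ)+1)^(-α) - QTT19.Tf α p K m)^2) (2^d)
      calc Real.sqrt (∑ k : Fin (2^d), ((((k.1:ℕ):ℝ) + 1)^(-α) - QTT19.Tf α p K k.1)^2)
          = Real.sqrt (∑ m ∈ Finset.range (2^d),
              ((((m:ℕ):ℝ)+1)^(-α) - QTT19.Tf α p K m)^2) := by rw [hconv]
        _ ≤ Real.sqrt (ε^2) := Real.sqrt_le_sqrt hSle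
        _ = ε := Real.sqrt_sq hε0.le
  · -- large α : keep only the first entry
    push_neg at hcase
    refine ⟨fun m : Fin (2^d) => QTT19.Tf α 0 0 m.1, ?_, ?_⟩
    · apply rank_bound
      · exact_mod_cast Nat.zero_le d
      · push_cast
        linarith
    · have hS := QTT19.err_sum hα (d := d) (p := 0) (Nat.zero_le d)
      simp only [Finset.range_zero, Finset.sum_empty, zero_mul, zero_add, pow_zero] at hS
      have hpt : ∀ m ∈ Finset.Ico (2^0) (2^d),
          ((((m:ℕ):ℝ)+1)^(-α))^2 ≤ ε^2 * ((((m:ℕ):ℝ)+1)⁻¹)^2 := by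
        intro m hm
        rw [Finset.mem_Ico, pow_zero] at hm
        have hm1 : 1 ≤ m := hm.1
        have h2le : (2:ℝ) ≤ (m:ℝ)+1 := by
          have : (1:ℝ) ≤ (m:ℝ) := by exact_mod_cast hm1
          linarith
        have hx0 : (0:ℝ) < ((m:ℕ):ℝ)+1 := by positivity
        have hsplit : (((m:ℕ):ℝ)+1)^(-α)
            = (((m:ℕ):ℝ)+1)^(-(α-1)) * (((m:ℕ):ℝ)+1)^(-1:ℝ) := by
          rw [show -α = -(α-1) + (-1:ℝ) by ring, Real.rpow_add hx0]
        have hb : (((m:ℕ):ℝ)+1)^(-(α-1)) ≤ (2:ℝ)^(-(α-1):ℝ) :=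
          Real.rpow_le_rpow_of_nonpos (by norm_num) h2le (by linarith)
        have hc : (2:ℝ)^(-(α-1):ℝ) ≤ ε := by
          rw [Real.rpow_def_of_pos (by norm_num : (0:ℝ) < 2), ← hexpL]
          apply Real.exp_le_exp.mpr
          have hmm : (2*L+1) * 0.6931 ≤ (α-1) * Real.log 2 := by
            apply mul_le_mul (by linarith) (by linarith [Real.log_two_gt_d9]) (by norm_num)
              (by linarith)
          nlinarith
        have hle : (((m:ℕ):ℝ)+1)^(-α) ≤ ε * (((m:ℕ):ℝ)+1)⁻¹ := by
          calc (((m:ℕ):ℝ)+1)^(-α)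
              = (((m:ℕ):ℝ)+1)^(-(α-1)) * (((m:ℕ):ℝ)+1)^(-1:ℝ) := hsplit
            _ ≤ ε * (((m:ℕ):ℝ)+1)⁻¹ := by
                rw [Real.rpow_neg_one]
                apply mul_le_mul (le_trans hb hc) le_rfl (by positivity) (by linarith)
        calc ((((m:ℕ):ℝ)+1)^(-α))^2 ≤ (ε * (((m:ℕ):ℝ)+1)⁻¹)^2 :=
              pow_le_pow_left₀ (Real.rpow_nonneg (by positivity) _) hle 2
          _ = ε^2 * ((((m:ℕ):ℝ)+1)⁻¹)^2 := by ring
      have htail : ∑ m ∈ Finset.Ico (2^0) (2^d), ((((m:ℕ):ℝ)+1)^(-α))^2 ≤ ε^2 := by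
        calc ∑ m ∈ Finset.Ico (2^0) (2^d), ((((m:ℕ):ℝ)+1)^(-α))^2
            ≤ ∑ m ∈ Finset.Ico (2^0) (2^d), ε^2 * ((((m:ℕ):ℝ)+1)⁻¹)^2 :=
              Finset.sum_le_sum hpt
          _ = ε^2 * ∑ m ∈ Finset.Ico (2^0) (2^d), ((((m:ℕ):ℝ)+1)⁻¹)^2 := by
              rw [Finset.mul_sum]
          _ ≤ ε^2 * 1 := by
              apply mul_le_mul_of_nonneg_left _ (by positivity)
              have h := QTT19.sum_inv_sq (a := 2^0) (by norm_num) (2^d)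
              simpa using h
          _ = ε^2 := by ring
      have hSle : ∑ m ∈ Finset.range (2^d), ((((m:ℕ):ℝ)+1)^(-α) - QTT19.Tf α 0 0 m)^2
          ≤ ε^2 := le_trans hS htail
      have hconv : ∑ k : Fin (2^d), ((((k.1:ℕ):ℝ) + 1)^(-α) - QTT19.Tf α 0 0 k.1)^2
          = ∑ m ∈ Finset.range (2^d), ((((m:ℕ):ℝ)+1)^(-α) - QTT19.Tf α 0 0 m)^2 :=
        Fin.sum_univ_eq_sum_range (fun m => ((((m:ℕ):ℝ)+1)^(-α) - QTT19.Tf α 0 0 m)^2) (2^d)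
      calc Real.sqrt (∑ k : Fin (2^d), ((((k.1:ℕ):ℝ) + 1)^(-α) - QTT19.Tf α 0 0 k.1)^2)
          = Real.sqrt (∑ m ∈ Finset.range (2^d),
              ((((m:ℕ):ℝ)+1)^(-α) - QTT19.Tf α 0 0 m)^2) := by rw [hconv]
        _ ≤ Real.sqrt (ε^2) := Real.sqrt_le_sqrt hSle
        _ = ε := Real.sqrt_sq hε0.le
end
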